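/- arXiv:0712.2696 — 3 statements merged into one kernel-verified Lean document; each statement's English description precedes it below -/
import Mathlib

section
/- Let E be an elliptic curve over ℚ given by a Weierstrass equation with integer coefficients, let P ∈ E(ℚ) be an affine point, and let k ≥ 1 be an integer such that k•P is also affine. Then den(x(P)) divides den(x(k•P)); equivalently, v_p(den(x(P))) ≤ v_p(den(x(k•P))) for every prime p. (This is the instance σ = [k] of the isogeny lemma: for an isogeny σ with source a minimal curve, v(B_P) ≤ v(B_{σ(P)}) at every finite place v.) -/
section PadicSection
variable {p : ℕ} [hp : Fact p.Prime]

local notation "ν" => padicNorm p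

lemma pnAddLe {a b C : ℚ} (ha : ν a ≤ C) (hb : ν b ≤ C) : ν (a + b) ≤ C :=
  le_trans padicNorm.nonarchimedean (max_le ha hb)

lemma pnAddEqLeft {a b : ℚ} (h : ν b < ν a) : ν (a + b) = ν a := by
  have := padicNorm.add_eq_max_of_ne (q := a) (r := b)
    (by exact fun he => absurd he.symm (ne_of_lt h))
  rw [this, max_eq_left h.le]

lemma pnPow (q : ℚ) (k : ℕ) : ν (q ^ k) = ν q ^ k := by
  induction k with
  | zero => simp
  | succ n ih => rw [pow_succ, pow_succ, padicNorm.mul, ih]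

lemma pnMulLe {a b C D : ℚ} (ha : ν a ≤ C) (hb : ν b ≤ D) : ν (a * b) ≤ C * D := by
  rw [padicNorm.mul]
  exact mul_le_mul ha hb (padicNorm.nonneg b) (le_trans (padicNorm.nonneg a) ha)

lemma pnCoef {a x C : ℚ} (ha : ν a ≤ 1) (hx : ν x ≤ C) : ν (a * x) ≤ C := by
  rw [padicNorm.mul]
  calc ν a * ν x ≤ 1 * C := mul_le_mul ha hx (padicNorm.nonneg x) zero_le_one
  _ = C := one_mul C

/-- On-curve points with `‖x‖ ≤ 1` have `‖y‖ ≤ 1`. -/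
lemma norm_y_le_one {a₁ a₂ a₃ a₄ a₆ x y : ℚ}
    (h1 : ν a₁ ≤ 1) (h2 : ν a₂ ≤ 1) (h3 : ν a₃ ≤ 1) (h4 : ν a₄ ≤ 1) (h6 : ν a₆ ≤ 1)
    (e : y ^ 2 + a₁ * x * y + a₃ * y = x ^ 3 + a₂ * x ^ 2 + a₄ * x + a₆)
    (hx : ν x ≤ 1) : ν y ≤ 1 := by
  by_contra hy
  push_neg at hy
  have hy0 : 0 < ν y := lt_trans one_pos hy
  have hx0 : 0 ≤ ν x := padicNorm.nonneg x
  have hx2 : ν (x ^ 2) ≤ 1 := by rw [pnPow]; exact pow_le_one₀ hx0 hx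
  have hx3 : ν (x ^ 3) ≤ 1 := by rw [pnPow]; exact pow_le_one₀ hx0 hx
  have hL : ν (y ^ 2 + (a₁ * x * y + a₃ * y)) = ν (y ^ 2) := by
    apply pnAddEqLeft
    rw [pnPow]
    apply lt_of_le_of_lt (pnAddLe (C := ν y) (pnCoef (pnCoef h1 hx) le_rfl) (pnCoef h3 le_rfl))
    nlinarith
  have hR : ν (x ^ 3 + a₂ * x ^ 2 + a₄ * x + a₆) ≤ 1 :=
    pnAddLe (pnAddLe (pnAddLe hx3 (pnCoef h2 hx2)) (pnCoef h4 hx)) h6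
  have he : ν (y ^ 2 + (a₁ * x * y + a₃ * y)) = ν (x ^ 3 + a₂ * x ^ 2 + a₄ * x + a₆) := by
    rw [show y ^ 2 + (a₁ * x * y + a₃ * y) = y ^ 2 + a₁ * x * y + a₃ * y by ring, e]
  rw [hL, pnPow] at he
  nlinarith

/-- On-curve points with `1 < ‖x‖` have `‖x‖ < ‖y‖` and `‖y‖² = ‖x‖³`. -/
lemma norm_y_of_big_x {a₁ a₂ a₃ a₄ a₆ x y : ℚ}
    (h1 : ν a₁ ≤ 1) (h2 : ν a₂ ≤ 1) (h3 : ν a₃ ≤ 1) (h4 : ν a₄ ≤ 1) (h6 : ν a₆ ≤ 1)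
    (e : y ^ 2 + a₁ * x * y + a₃ * y = x ^ 3 + a₂ * x ^ 2 + a₄ * x + a₆)
    (hx : 1 < ν x) : ν x < ν y ∧ ν y ^ 2 = ν x ^ 3 := by
  have hy0 : 0 ≤ ν y := padicNorm.nonneg y
  have hx0 : 0 < ν x := lt_trans one_pos hx
  have hx23 : ν x ^ 2 < ν x ^ 3 := by nlinarith [mul_pos (mul_pos hx0 hx0) (sub_pos.mpr hx)]
  have hR : ν (x ^ 3 + (a₂ * x ^ 2 + a₄ * x + a₆)) = ν (x ^ 3) := by
    apply pnAddEqLeft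
    rw [pnPow]
    refine lt_of_le_of_lt (pnAddLe (pnAddLe (C := ν x ^ 2)
      (pnCoef h2 (le_of_eq (pnPow x 2))) ?_) ?_) hx23
    · exact pnCoef h4 (by nlinarith)
    · exact le_trans h6 (by nlinarith)
  have hxy : ν x < ν y := by
    by_contra hyx
    push_neg at hyx
    have hL : ν (y ^ 2 + a₁ * x * y + a₃ * y) ≤ ν x ^ 2 := by
      refine pnAddLe (pnAddLe ?_ ?_) ?_
      · rw [pnPow]; nlinarith
      · exact le_trans (pnMulLe (pnCoef h1 le_rfl) hyx) (by nlinarith)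
      · exact le_trans (pnCoef h3 hyx) (by nlinarith)
    have he : ν (y ^ 2 + a₁ * x * y + a₃ * y) = ν (x ^ 3 + (a₂ * x ^ 2 + a₄ * x + a₆)) := by
      rw [show x ^ 3 + (a₂ * x ^ 2 + a₄ * x + a₆) = x ^ 3 + a₂ * x ^ 2 + a₄ * x + a₆ by ring, e]
    rw [hR, pnPow] at he
    nlinarith
  have hy0' : 0 < ν y := lt_trans hx0 hxy
  refine ⟨hxy, ?_⟩
  have hL : ν (y ^ 2 + (a₁ * x * y + a₃ * y)) = ν (y ^ 2) := by
    apply pnAddEqLeft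
    rw [pnPow]
    refine lt_of_le_of_lt (pnAddLe (C := ν x * ν y)
      (pnMulLe (pnCoef h1 le_rfl) le_rfl) ?_) ?_
    · exact le_trans (pnCoef h3 le_rfl) (by nlinarith)
    · nlinarith [mul_pos (sub_pos.mpr hxy) hy0']
  have he : ν (y ^ 2 + (a₁ * x * y + a₃ * y)) = ν (x ^ 3 + (a₂ * x ^ 2 + a₄ * x + a₆)) := by
    rw [show y ^ 2 + (a₁ * x * y + a₃ * y) = y ^ 2 + a₁ * x * y + a₃ * y by ring,
      show x ^ 3 + (a₂ * x ^ 2 + a₄ * x + a₆) = x ^ 3 + a₂ * x ^ 2 + a₄ * x + a₆ by ring, e]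
  rw [hL, hR, pnPow, pnPow] at he
  exact he

/-- the Weierstrass equation in (t,s) = (-x/y, -1/y) coordinates -/
lemma ts_equation {a₁ a₂ a₃ a₄ a₆ x y : ℚ}
    (e : y ^ 2 + a₁ * x * y + a₃ * y = x ^ 3 + a₂ * x ^ 2 + a₄ * x + a₆)
    (hy : y ≠ 0) :
    -1/y = (-x/y)^3 + a₁*(-x/y)*(-1/y) + a₂*(-x/y)^2*(-1/y) + a₃*(-1/y)^2
      + a₄*(-x/y)*(-1/y)^2 + a₆*(-1/y)^3 := by
  field_simp
  linear_combination (-1) * e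

lemma ts_facts {a₁ a₂ a₃ a₄ a₆ x y : ℚ}
    (h1 : ν a₁ ≤ 1) (h2 : ν a₂ ≤ 1) (h3 : ν a₃ ≤ 1) (h4 : ν a₄ ≤ 1) (h6 : ν a₆ ≤ 1)
    (e : y ^ 2 + a₁ * x * y + a₃ * y = x ^ 3 + a₂ * x ^ 2 + a₄ * x + a₆)
    (hx : 1 < ν x) :
    y ≠ 0 ∧ x ≠ 0 ∧ ν (-x/y) ^ 2 * ν x = 1 ∧ ν (-1/y) = ν (-x/y) ^ 3 := by
  obtain ⟨hxy, hy2⟩ := norm_y_of_big_x h1 h2 h3 h4 h6 e hx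
  have hx0 : 0 < ν x := lt_trans one_pos hx
  have hy0 : 0 < ν y := lt_trans hx0 hxy
  have hy : y ≠ 0 := fun h => by rw [h, padicNorm.zero] at hy0; exact lt_irrefl 0 hy0
  have hxne : x ≠ 0 := fun h => by rw [h, padicNorm.zero] at hx0; exact lt_irrefl 0 hx0
  have ht : ν (-x/y) = ν x / ν y := by
    rw [show -x/y = -(x/y) by ring, padicNorm.neg, padicNorm.div]
  have hs : ν (-1/y) = 1 / ν y := by
    rw [show -1/y = -(1/y) by ring, padicNorm.neg, padicNorm.div, padicNorm.one]
  rw [ht, hs]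
  set a := ν x with ha
  set b := ν y with hb
  refine ⟨hy, hxne, ?_, ?_⟩
  · field_simp
    linear_combination -hy2
  · field_simp
    linear_combination hy2


section PureArith
variable {c d u B D X s a : ℚ}

lemma ar_dlt1 (hc : 1 < c) (hcd : c * d = 1) (hd0 : 0 < d) : d < 1 := by nlinarith

lemma ar_pow21 (hd0 : 0 < d) (hd1 : d < 1) : d^2 < 1 := pow_lt_one₀ hd0.le hd1 (by norm_num)

lemma ar_pow31 (hd0 : 0 < d) (hd1 : d < 1) : d^3 < 1 := pow_lt_one₀ hd0.le hd1 (by norm_num)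

lemma ar_pow32 (hd0 : 0 < d) (hd1 : d < 1) : d^3 ≤ d^2 := by nlinarith

lemma ar_y0 (hc : 1 < c) (hcd : c * d = 1) (hd0 : 0 < d) (ha : a ≤ d^2)
    (hν : a * X = 1) (ha0 : 0 < a) (hX0 : 0 ≤ X) : c^2 ≤ X := by
  nlinarith [mul_le_mul_of_nonneg_left ha (sq_nonneg c), sq_nonneg (c*d)]

lemma ar_scon1 (hd0 : 0 < d) (hd1 : d < 1) (hs1 : 1 ≤ s) : d^2 * s < s := by
  nlinarith [mul_pos (sub_pos.mpr (ar_pow21 hd0 hd1)) (lt_of_lt_of_le one_pos hs1)]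

lemma ar_scon2 (hd0 : 0 < d) (hd1 : d < 1) (hs1 : 1 ≤ s) (hb : B ≤ d^3) : B < s :=
  lt_of_le_of_lt hb (lt_of_lt_of_le (ar_pow31 hd0 hd1) hs1)

lemma ar_newton (hd0 : 0 < d) (hdu : d < u) (hle : u^3 ≤ d * u^2) : False := by
  nlinarith [mul_pos (lt_trans hd0 hdu) (lt_trans hd0 hdu)]

lemma ar_b1 (hB : B ≤ d^2) (hB0 : 0 ≤ B) (hd0 : 0 < d) (hd1 : d < 1) (hu0 : 0 ≤ u) :
    B * u^2 ≤ d * u^2 := by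
  nlinarith [mul_le_mul_of_nonneg_right (le_trans hB (by nlinarith : d^2 ≤ d)) (sq_nonneg u)]

lemma ar_b2 (hB : B ≤ d^2) (hB0 : 0 ≤ B) (hd0 : 0 < d) (hdu : d ≤ u) : B * u ≤ d * u^2 := by
  have hu0 : 0 ≤ u := le_trans hd0.le hdu
  nlinarith [mul_le_mul_of_nonneg_right hB hu0,
    mul_le_mul_of_nonneg_left (mul_le_mul_of_nonneg_right hdu hu0) hd0.le]

lemma ar_b3 (hD : D ≤ d^3) (hd0 : 0 < d) (hdu : d ≤ u) : D ≤ d * u^2 := by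
  nlinarith [mul_le_mul (mul_le_mul hdu hdu hd0.le (le_trans hd0.le hdu)) (le_refl d) hd0.le
    (mul_nonneg (le_trans hd0.le hdu) (le_trans hd0.le hdu))]

lemma ar_final (hc : 1 < c) (hcd : c * d = 1) (hd0 : 0 < d) (hu0 : 0 < u)
    (hud : u ≤ d) (hXu : X * u^2 = 1) : c^2 ≤ X := by
  nlinarith [mul_le_mul_of_nonneg_left (mul_le_mul hud hud hu0.le hd0.le) (sq_nonneg c),
    sq_nonneg (c*d), mul_pos hu0 hu0]

end PureArith

set_option maxHeartbeats 1000000 in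
lemma third_point_bound {a₁ a₂ a₃ a₄ a₆ : ℚ}
    (h1 : ν a₁ ≤ 1) (h2 : ν a₂ ≤ 1) (h3 : ν a₃ ≤ 1) (h4 : ν a₄ ≤ 1) (h6 : ν a₆ ≤ 1)
    {c : ℚ} (hc : 1 < c) {L α β μ X Y : ℚ}
    (hα : ν α ≤ c⁻¹ ^ 2) (hβ : ν β ≤ c⁻¹ ^ 3)
    (hLβ : L * β = α) (hβμ : β * μ = -1)
    (hline : Y = L * X + μ)
    (e₃ : Y ^ 2 + a₁ * X * Y + a₃ * Y = X ^ 3 + a₂ * X ^ 2 + a₄ * X + a₆) :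
    c ^ 2 ≤ ν X := by
  have hc0 : 0 < c := lt_trans one_pos hc
  set d : ℚ := c⁻¹ with hd
  have hcd : c * d = 1 := mul_inv_cancel₀ (ne_of_gt hc0)
  have hd0 : 0 < d := by rw [hd]; exact inv_pos.mpr hc0
  have hd1 : d < 1 := ar_dlt1 hc hcd hd0
  have hd21 : d^2 < 1 := ar_pow21 hd0 hd1
  have hd31 : d^3 < 1 := ar_pow31 hd0 hd1
  have hd32 : d^3 ≤ d^2 := ar_pow32 hd0 hd1
  have hkey : β * Y + 1 = α * X := by rw [hline]; linear_combination X * hLβ + hβμ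
  have hβ0 : β ≠ 0 := by intro h; rw [h, zero_mul] at hβμ; exact absurd hβμ (by norm_num)
  by_cases hY : Y = 0
  · -- the third point has y-coordinate 0 : then α X = 1
    have hαX : α * X = 1 := by rw [hY, mul_zero, zero_add] at hkey; exact hkey.symm
    have hν : ν α * ν X = 1 := by rw [← padicNorm.mul, hαX, padicNorm.one]
    have hα0 : 0 < ν α := by
      rcases lt_or_eq_of_le (padicNorm.nonneg (p := p) α) with h | h
      · exact h
      · exfalso; rw [← h, zero_mul] at hν; norm_num at hν
    exact ar_y0 hc hcd hd0 hα hν hα0 (padicNorm.nonneg X)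
  · have hY0 : 0 < ν Y :=
      lt_of_le_of_ne (padicNorm.nonneg Y) (Ne.symm (padicNorm.nonzero hY))
    have hsline : -1/Y = α * (-X/Y) + β := by
      field_simp
      linear_combination -hkey
    have hsY : ν (-1/Y) = 1 / ν Y := by
      rw [show -1/Y = -(1/Y) by ring, padicNorm.neg, padicNorm.div, padicNorm.one]
    have htX : ν (-X/Y) = ν X * ν (-1/Y) := by
      rw [show -X/Y = X * (-1/Y) by ring, padicNorm.mul]
    have hX1 : 1 < ν X := by
      by_contra h
      push_neg at h
      have hYle : ν Y ≤ 1 := norm_y_le_one h1 h2 h3 h4 h6 e₃ h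
      have hs1 : 1 ≤ ν (-1/Y) := by rw [hsY, le_div_iff₀ hY0]; linarith
      have hαt : ν (α * (-X/Y)) ≤ d^2 * ν (-1/Y) := by
        rw [padicNorm.mul, htX]
        have hXs : ν X * ν (-1/Y) ≤ ν (-1/Y) := by
          have := mul_le_mul_of_nonneg_right h (padicNorm.nonneg (p := p) (-1/Y))
          rwa [one_mul] at this
        exact mul_le_mul hα hXs (mul_nonneg (padicNorm.nonneg _) (padicNorm.nonneg _))
          (sq_nonneg d)
      have hcon : ν (-1/Y) < ν (-1/Y) := by
        calc ν (-1/Y) = ν (α * (-X/Y) + β) := by rw [← hsline]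
        _ ≤ max (ν (α * (-X/Y))) (ν β) := padicNorm.nonarchimedean
        _ < ν (-1/Y) := by
            apply max_lt
            · exact lt_of_le_of_lt hαt (ar_scon1 hd0 hd1 hs1)
            · exact ar_scon2 hd0 hd1 hs1 hβ
      exact lt_irrefl _ hcon
    obtain ⟨hYne2, hXne, htsq, hseq⟩ := ts_facts h1 h2 h3 h4 h6 e₃ hX1
    set u : ℚ := ν (-X/Y) with hu
    have hu0 : 0 < u := by
      rcases lt_or_eq_of_le (padicNorm.nonneg (p := p) (-X/Y)) with h | h
      · exact h
      · exfalso
        have hu00 : u = 0 := by rw [hu, ← h]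
        rw [hu00] at htsq; norm_num at htsq
    have ets := ts_equation e₃ hY
    rw [hsline] at ets
    have hcubic : (1 + (a₂*α + a₄*α^2 + a₆*α^3)) * (-X/Y)^3
        + (a₁*α + a₂*β + a₃*α^2 + 2*(a₄*(α*β)) + 3*(a₆*(α^2*β))) * (-X/Y)^2
        + (-α + (a₁*β + 2*(a₃*(α*β)) + a₄*β^2 + 3*(a₆*(α*β^2)))) * (-X/Y)
        + (-β + (a₃*β^2 + a₆*β^3)) = 0 := by linear_combination -ets
    have hdle : ∀ m n : ℕ, m ≤ n → d^n ≤ d^m := fun m n h =>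
      pow_le_pow_of_le_one hd0.le hd1.le h
    have hα0 : 0 ≤ ν α := padicNorm.nonneg α
    have hβ0' : 0 ≤ ν β := padicNorm.nonneg β
    have hα2 : ν (α^2) ≤ d^2 := by
      rw [pnPow]
      calc ν α ^ 2 ≤ (d^2)^2 := pow_le_pow_left₀ hα0 hα 2
      _ = d^4 := by ring
      _ ≤ d^2 := hdle 2 4 (by norm_num)
    have hα3 : ν (α^3) ≤ d^2 := by
      rw [pnPow]
      calc ν α ^ 3 ≤ (d^2)^3 := pow_le_pow_left₀ hα0 hα 3
      _ = d^6 := by ring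
      _ ≤ d^2 := hdle 2 6 (by norm_num)
    have hβ' : ν β ≤ d^2 := le_trans hβ hd32
    have hαβ : ν (α*β) ≤ d^2 := by
      rw [padicNorm.mul]
      calc ν α * ν β ≤ d^2 * d^3 := mul_le_mul hα hβ hβ0' (by positivity)
      _ = d^5 := by ring
      _ ≤ d^2 := hdle 2 5 (by norm_num)
    have hα2β : ν (α^2*β) ≤ d^2 := by
      rw [padicNorm.mul, pnPow]
      calc ν α ^ 2 * ν β ≤ (d^2)^2 * d^3 :=
        mul_le_mul (pow_le_pow_left₀ hα0 hα 2) hβ hβ0' (by positivity)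
      _ = d^7 := by ring
      _ ≤ d^2 := hdle 2 7 (by norm_num)
    have hβ2 : ν (β^2) ≤ d^3 := by
      rw [pnPow]
      calc ν β ^ 2 ≤ (d^3)^2 := pow_le_pow_left₀ hβ0' hβ 2
      _ = d^6 := by ring
      _ ≤ d^3 := hdle 3 6 (by norm_num)
    have hαβ2 : ν (α*β^2) ≤ d^2 := by
      rw [padicNorm.mul, pnPow]
      calc ν α * ν β ^ 2 ≤ d^2 * (d^3)^2 :=
        mul_le_mul hα (pow_le_pow_left₀ hβ0' hβ 2) (by positivity) (by positivity)
      _ = d^8 := by ring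
      _ ≤ d^2 := hdle 2 8 (by norm_num)
    have hβ3 : ν (β^3) ≤ d^3 := by
      rw [pnPow]
      calc ν β ^ 3 ≤ (d^3)^3 := pow_le_pow_left₀ hβ0' hβ 3
      _ = d^9 := by ring
      _ ≤ d^3 := hdle 3 9 (by norm_num)
    have h2' : ν (2 : ℚ) ≤ 1 := by exact_mod_cast padicNorm.of_int (p := p) 2
    have h3' : ν (3 : ℚ) ≤ 1 := by exact_mod_cast padicNorm.of_int (p := p) 3
    have hR : ν (a₂*α + a₄*α^2 + a₆*α^3) ≤ d^2 :=
      pnAddLe (pnAddLe (pnCoef h2 hα) (pnCoef h4 hα2)) (pnCoef h6 hα3)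
    have hA : ν (1 + (a₂*α + a₄*α^2 + a₆*α^3)) = 1 := by
      have := pnAddEqLeft (a := 1) (b := a₂*α + a₄*α^2 + a₆*α^3)
        (by rw [padicNorm.one]; exact lt_of_le_of_lt hR hd21)
      rw [padicNorm.one] at this
      exact this
    have hB : ν (a₁*α + a₂*β + a₃*α^2 + 2*(a₄*(α*β)) + 3*(a₆*(α^2*β))) ≤ d^2 :=
      pnAddLe (pnAddLe (pnAddLe (pnAddLe (pnCoef h1 hα) (pnCoef h2 hβ')) (pnCoef h3 hα2))
        (pnCoef h2' (pnCoef h4 hαβ))) (pnCoef h3' (pnCoef h6 hα2β))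
    have hC : ν (-α + (a₁*β + 2*(a₃*(α*β)) + a₄*β^2 + 3*(a₆*(α*β^2)))) ≤ d^2 := by
      apply pnAddLe
      · rw [padicNorm.neg]; exact hα
      · exact pnAddLe (pnAddLe (pnAddLe (pnCoef h1 hβ') (pnCoef h2' (pnCoef h3 hαβ)))
          (pnCoef h4 (le_trans hβ2 hd32))) (pnCoef h3' (pnCoef h6 hαβ2))
    have hD : ν (-β + (a₃*β^2 + a₆*β^3)) ≤ d^3 := by
      apply pnAddLe
      · rw [padicNorm.neg]; exact hβ
      · exact pnAddLe (pnCoef h3 hβ2) (pnCoef h6 hβ3)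
    -- Newton polygon bound : u ≤ d
    have hud : u ≤ d := by
      by_contra hgt
      push_neg at hgt
      have hcube : (1 + (a₂*α + a₄*α^2 + a₆*α^3)) * (-X/Y)^3
          = -((a₁*α + a₂*β + a₃*α^2 + 2*(a₄*(α*β)) + 3*(a₆*(α^2*β))) * (-X/Y)^2
            + ((-α + (a₁*β + 2*(a₃*(α*β)) + a₄*β^2 + 3*(a₆*(α*β^2)))) * (-X/Y)
            + (-β + (a₃*β^2 + a₆*β^3)))) := by linear_combination hcubic
      have hleft : ν ((1 + (a₂*α + a₄*α^2 + a₆*α^3)) * (-X/Y)^3) = u^3 := by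
        rw [padicNorm.mul, hA, pnPow, one_mul]
      have hb1 : ν ((a₁*α + a₂*β + a₃*α^2 + 2*(a₄*(α*β)) + 3*(a₆*(α^2*β))) * (-X/Y)^2)
          ≤ d * u^2 := by
        rw [padicNorm.mul, pnPow, ← hu]
        exact ar_b1 hB (padicNorm.nonneg _) hd0 hd1 hu0.le
      have hb2 : ν ((-α + (a₁*β + 2*(a₃*(α*β)) + a₄*β^2 + 3*(a₆*(α*β^2)))) * (-X/Y))
          ≤ d * u^2 := by
        rw [padicNorm.mul, ← hu]
        exact ar_b2 hC (padicNorm.nonneg _) hd0 hgt.le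
      have hb3 : ν (-β + (a₃*β^2 + a₆*β^3)) ≤ d * u^2 := ar_b3 hD hd0 hgt.le
      have hle : u^3 ≤ d * u^2 := by
        rw [← hleft, hcube, padicNorm.neg]
        exact pnAddLe hb1 (pnAddLe hb2 hb3)
      exact ar_newton hd0 hgt hle
    -- conclude
    have hXu : ν X * u^2 = 1 := by linear_combination htsq
    exact ar_final hc hcd hd0 hu0 hud hXu


lemma ar_tled {t x c d : ℚ} (hc : 1 < c) (hcd : c * d = 1) (hd0 : 0 < d)
    (ht : t^2 * x = 1) (hx : c^2 ≤ x) (ht0 : 0 ≤ t) : t ≤ d := by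
  have hc0 : 0 < c := lt_trans one_pos hc
  have hcd2 : c^2 * d^2 = 1 := by nlinarith
  have h2 : t^2 ≤ d^2 := by
    nlinarith [mul_le_mul_of_nonneg_left hx (sq_nonneg t), mul_pos hc0 hc0]
  nlinarith [sq_nonneg (t - d), sq_nonneg (t + d)]

/-- All the basic facts about a point in the region `c² ≤ ‖x‖`. -/
lemma region_facts {a₁ a₂ a₃ a₄ a₆ x y c : ℚ}
    (h1 : ν a₁ ≤ 1) (h2 : ν a₂ ≤ 1) (h3 : ν a₃ ≤ 1) (h4 : ν a₄ ≤ 1) (h6 : ν a₆ ≤ 1)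
    (hc : 1 < c)
    (e : y ^ 2 + a₁ * x * y + a₃ * y = x ^ 3 + a₂ * x ^ 2 + a₄ * x + a₆)
    (hx : c^2 ≤ ν x) :
    y ≠ 0 ∧ ν (-x/y) ≤ c⁻¹ ∧ ν (-1/y) ≤ c⁻¹^3 := by
  have hc0 : 0 < c := lt_trans one_pos hc
  set d : ℚ := c⁻¹ with hd
  have hcd : c * d = 1 := mul_inv_cancel₀ (ne_of_gt hc0)
  have hd0 : 0 < d := by rw [hd]; exact inv_pos.mpr hc0
  have hx1 : 1 < ν x := by nlinarith
  obtain ⟨hy, hxne, htsq, hseq⟩ := ts_facts h1 h2 h3 h4 h6 e hx1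
  have htd : ν (-x/y) ≤ d := ar_tled hc hcd hd0 htsq hx (padicNorm.nonneg _)
  refine ⟨hy, htd, ?_⟩
  rw [hseq]
  exact pow_le_pow_left₀ (padicNorm.nonneg _) htd 3

/-- The slope construction in (t,s)-coordinates for the chord case. -/
lemma chord_ts {a₁ a₂ a₃ a₄ a₆ t₁ s₁ t₂ s₂ d : ℚ}
    (h1 : ν a₁ ≤ 1) (h2 : ν a₂ ≤ 1) (h3 : ν a₃ ≤ 1) (h4 : ν a₄ ≤ 1) (h6 : ν a₆ ≤ 1)
    (hd0 : 0 < d) (hd1 : d < 1)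
    (ht₁ : ν t₁ ≤ d) (hs₁ : ν s₁ ≤ d^3) (ht₂ : ν t₂ ≤ d) (hs₂ : ν s₂ ≤ d^3)
    (ets₁ : s₁ = t₁^3 + a₁*t₁*s₁ + a₂*t₁^2*s₁ + a₃*s₁^2 + a₄*t₁*s₁^2 + a₆*s₁^3)
    (ets₂ : s₂ = t₂^3 + a₁*t₂*s₂ + a₂*t₂^2*s₂ + a₃*s₂^2 + a₄*t₂*s₂^2 + a₆*s₂^3) :
    ∃ N D : ℚ, ν N ≤ d^2 ∧ ν D = 1 ∧ D ≠ 0 ∧ (s₁ - s₂) * D = (t₁ - t₂) * N := by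
  have hd32 : d^3 ≤ d^2 := ar_pow32 hd0 hd1
  have hd2 : d^2 ≤ d := by nlinarith
  have hdle : ∀ m n : ℕ, m ≤ n → d^n ≤ d^m := fun m n h =>
    pow_le_pow_of_le_one hd0.le hd1.le h
  have ht₁2 : ν (t₁^2) ≤ d^2 := by
    rw [pnPow]; exact pow_le_pow_left₀ (padicNorm.nonneg _) ht₁ 2
  have ht₂2 : ν (t₂^2) ≤ d^2 := by
    rw [pnPow]; exact pow_le_pow_left₀ (padicNorm.nonneg _) ht₂ 2
  have ht₁t₂ : ν (t₁*t₂) ≤ d^2 := by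
    rw [padicNorm.mul, sq]
    exact mul_le_mul ht₁ ht₂ (padicNorm.nonneg _) hd0.le
  have hs₁d2 : ν s₁ ≤ d^2 := le_trans hs₁ hd32
  have hs₁2 : ν (s₁^2) ≤ d^6 := by
    rw [pnPow]
    calc ν s₁ ^ 2 ≤ (d^3)^2 := pow_le_pow_left₀ (padicNorm.nonneg _) hs₁ 2
    _ = d^6 := by ring
  have hs₂2 : ν (s₂^2) ≤ d^6 := by
    rw [pnPow]
    calc ν s₂ ^ 2 ≤ (d^3)^2 := pow_le_pow_left₀ (padicNorm.nonneg _) hs₂ 2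
    _ = d^6 := by ring
  have hs₁s₂ : ν (s₁*s₂) ≤ d^6 := by
    rw [padicNorm.mul]
    calc ν s₁ * ν s₂ ≤ d^3 * d^3 := mul_le_mul hs₁ hs₂ (padicNorm.nonneg _) (by positivity)
    _ = d^6 := by ring
  have hN : ν (t₁^2 + t₁*t₂ + t₂^2 + a₁*s₁ + a₂*((t₁+t₂)*s₁) + a₄*(s₁^2)) ≤ d^2 := by
    refine pnAddLe (pnAddLe (pnAddLe (pnAddLe (pnAddLe ht₁2 ht₁t₂) ht₂2)
      (pnCoef h1 hs₁d2)) (pnCoef h2 ?_)) (pnCoef h4 (le_trans hs₁2 (hdle 2 6 (by norm_num))))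
    rw [padicNorm.mul]
    calc ν (t₁+t₂) * ν s₁ ≤ d * d^3 :=
      mul_le_mul (pnAddLe ht₁ ht₂) hs₁ (padicNorm.nonneg _) hd0.le
    _ = d^4 := by ring
    _ ≤ d^2 := hdle 2 4 (by norm_num)
  have hDrest : ν (a₁*t₂ + a₂*(t₂^2) + a₃*(s₁+s₂) + a₄*(t₂*(s₁+s₂))
      + a₆*(s₁^2+s₁*s₂+s₂^2)) ≤ d := by
    refine pnAddLe (pnAddLe (pnAddLe (pnAddLe (pnCoef h1 ht₂) (pnCoef h2 (le_trans ht₂2 hd2)))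
      (pnCoef h3 ?_)) (pnCoef h4 ?_)) (pnCoef h6 ?_)
    · exact le_trans (pnAddLe hs₁ hs₂) (le_trans hd32 hd2)
    · rw [padicNorm.mul]
      calc ν t₂ * ν (s₁+s₂) ≤ d * d^3 :=
        mul_le_mul ht₂ (pnAddLe hs₁ hs₂) (padicNorm.nonneg _) hd0.le
      _ = d^4 := by ring
      _ ≤ d := by simpa using hdle 1 4 (by norm_num)
    · exact le_trans (pnAddLe (pnAddLe hs₁2 hs₁s₂) hs₂2) (by simpa using hdle 1 6 (by norm_num))
  have hD1 : ν (1 + -(a₁*t₂ + a₂*(t₂^2) + a₃*(s₁+s₂) + a₄*(t₂*(s₁+s₂))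
      + a₆*(s₁^2+s₁*s₂+s₂^2))) = 1 := by
    have := pnAddEqLeft (a := 1)
      (b := -(a₁*t₂ + a₂*(t₂^2) + a₃*(s₁+s₂) + a₄*(t₂*(s₁+s₂)) + a₆*(s₁^2+s₁*s₂+s₂^2)))
      (by rw [padicNorm.one, padicNorm.neg]; exact lt_of_le_of_lt hDrest hd1)
    rw [padicNorm.one] at this
    exact this
  refine ⟨_, _, hN, hD1, fun h => by rw [h, padicNorm.zero] at hD1; norm_num at hD1, ?_⟩
  linear_combination ets₁ - ets₂

/-- The slope construction in (t,s)-coordinates for the tangent case. -/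
lemma tangent_ts {a₁ a₂ a₃ a₄ a₆ t s d : ℚ}
    (h1 : ν a₁ ≤ 1) (h2 : ν a₂ ≤ 1) (h3 : ν a₃ ≤ 1) (h4 : ν a₄ ≤ 1) (h6 : ν a₆ ≤ 1)
    (hd0 : 0 < d) (hd1 : d < 1)
    (ht : ν t ≤ d) (hs : ν s ≤ d^3) :
    ∃ N D : ℚ, ν N ≤ d^2 ∧ ν D = 1 ∧ D ≠ 0 ∧
      N = 3*(t^2) + a₁*s + 2*(a₂*(t*s)) + a₄*(s^2) ∧
      D = 1 + -(a₁*t + a₂*(t^2) + 2*(a₃*s) + 2*(a₄*(t*s)) + 3*(a₆*(s^2))) := by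
  have hd32 : d^3 ≤ d^2 := ar_pow32 hd0 hd1
  have hd2 : d^2 ≤ d := by nlinarith
  have hdle : ∀ m n : ℕ, m ≤ n → d^n ≤ d^m := fun m n h =>
    pow_le_pow_of_le_one hd0.le hd1.le h
  have h3' : ν (3 : ℚ) ≤ 1 := by exact_mod_cast padicNorm.of_int (p := p) 3
  have h2' : ν (2 : ℚ) ≤ 1 := by exact_mod_cast padicNorm.of_int (p := p) 2
  have ht2 : ν (t^2) ≤ d^2 := by
    rw [pnPow]; exact pow_le_pow_left₀ (padicNorm.nonneg _) ht 2
  have hts : ν (t*s) ≤ d^2 := by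
    rw [padicNorm.mul]
    calc ν t * ν s ≤ d * d^3 := mul_le_mul ht hs (padicNorm.nonneg _) hd0.le
    _ = d^4 := by ring
    _ ≤ d^2 := hdle 2 4 (by norm_num)
  have hs2 : ν (s^2) ≤ d^2 := by
    rw [pnPow]
    calc ν s ^ 2 ≤ (d^3)^2 := pow_le_pow_left₀ (padicNorm.nonneg _) hs 2
    _ = d^6 := by ring
    _ ≤ d^2 := hdle 2 6 (by norm_num)
  have hN : ν (3*(t^2) + a₁*s + 2*(a₂*(t*s)) + a₄*(s^2)) ≤ d^2 :=
    pnAddLe (pnAddLe (pnAddLe (pnCoef h3' ht2) (pnCoef h1 (le_trans hs hd32)))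
      (pnCoef h2' (pnCoef h2 hts))) (pnCoef h4 hs2)
  have hDrest : ν (a₁*t + a₂*(t^2) + 2*(a₃*s) + 2*(a₄*(t*s)) + 3*(a₆*(s^2))) ≤ d :=
    pnAddLe (pnAddLe (pnAddLe (pnAddLe (pnCoef h1 ht) (pnCoef h2 (le_trans ht2 hd2)))
      (pnCoef h2' (pnCoef h3 (le_trans hs (le_trans hd32 hd2)))))
      (pnCoef h2' (pnCoef h4 (le_trans hts hd2)))) (pnCoef h3' (pnCoef h6 (le_trans hs2 hd2)))
  have hD1 : ν (1 + -(a₁*t + a₂*(t^2) + 2*(a₃*s) + 2*(a₄*(t*s)) + 3*(a₆*(s^2)))) = 1 := by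
    have := pnAddEqLeft (a := 1)
      (b := -(a₁*t + a₂*(t^2) + 2*(a₃*s) + 2*(a₄*(t*s)) + 3*(a₆*(s^2))))
      (by rw [padicNorm.one, padicNorm.neg]; exact lt_of_le_of_lt hDrest hd1)
    rw [padicNorm.one] at this
    exact this
  exact ⟨_, _, hN, hD1, fun h => by rw [h, padicNorm.zero] at hD1; norm_num at hD1, rfl, rfl⟩

lemma chord_package {a₁ a₂ a₃ a₄ a₆ x₁ y₁ x₂ y₂ c : ℚ}
    (h1 : ν a₁ ≤ 1) (h2 : ν a₂ ≤ 1) (h3 : ν a₃ ≤ 1) (h4 : ν a₄ ≤ 1) (h6 : ν a₆ ≤ 1)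
    (hc : 1 < c)
    (e₁ : y₁ ^ 2 + a₁ * x₁ * y₁ + a₃ * y₁ = x₁ ^ 3 + a₂ * x₁ ^ 2 + a₄ * x₁ + a₆)
    (e₂ : y₂ ^ 2 + a₁ * x₂ * y₂ + a₃ * y₂ = x₂ ^ 3 + a₂ * x₂ ^ 2 + a₄ * x₂ + a₆)
    (hx₁ : c^2 ≤ ν x₁) (hx₂ : c^2 ≤ ν x₂) (hne : x₁ ≠ x₂) :
    ∃ α β : ℚ, ν α ≤ c⁻¹^2 ∧ ν β ≤ c⁻¹^3 ∧
      ((y₁ - y₂)/(x₁ - x₂)) * β = α ∧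
      β * (y₁ - ((y₁ - y₂)/(x₁ - x₂)) * x₁) = -1 := by
  have hc0 : 0 < c := lt_trans one_pos hc
  have hd0 : 0 < c⁻¹ := inv_pos.mpr hc0
  have hcd : c * c⁻¹ = 1 := mul_inv_cancel₀ (ne_of_gt hc0)
  have hd1 : c⁻¹ < 1 := ar_dlt1 hc hcd hd0
  obtain ⟨hy₁, ht₁, hs₁⟩ := region_facts h1 h2 h3 h4 h6 hc e₁ hx₁
  obtain ⟨hy₂, ht₂, hs₂⟩ := region_facts h1 h2 h3 h4 h6 hc e₂ hx₂
  have ets₁ := ts_equation e₁ hy₁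
  have ets₂ := ts_equation e₂ hy₂
  obtain ⟨N, D, hN, hD1, hD0, hid⟩ := chord_ts h1 h2 h3 h4 h6 hd0 hd1 ht₁ hs₁ ht₂ hs₂
    (by linear_combination ets₁) (by linear_combination ets₂)
  have hxx : x₁ - x₂ ≠ 0 := sub_ne_zero.mpr hne
  have hs12 : -1/y₁ - -1/y₂ = (N/D) * (-x₁/y₁ - -x₂/y₂) := by
    rw [div_mul_eq_mul_div, eq_div_iff hD0]
    linear_combination hid
  have hβy₁ : (-1/y₁ - (N/D)*(-x₁/y₁)) * y₁ = (N/D)*x₁ - 1 := by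
    field_simp
    ring
  have hβy₂ : (-1/y₁ - (N/D)*(-x₁/y₁)) * y₂ = (N/D)*x₂ - 1 := by
    have hβalt : -1/y₁ - (N/D)*(-x₁/y₁) = -1/y₂ - (N/D)*(-x₂/y₂) := by
      linear_combination hs12
    rw [hβalt]
    field_simp
    ring
  have hLβ : ((y₁ - y₂)/(x₁ - x₂)) * (-1/y₁ - (N/D)*(-x₁/y₁)) = N/D := by
    rw [div_mul_eq_mul_div, div_eq_iff hxx]
    linear_combination hβy₁ - hβy₂
  refine ⟨N/D, -1/y₁ - (N/D)*(-x₁/y₁), ?_, ?_, hLβ, ?_⟩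
  · rw [padicNorm.div, hD1, div_one]; exact hN
  · rw [sub_eq_add_neg]
    apply pnAddLe hs₁
    rw [show -((N/D)*(-x₁/y₁)) = -(N/D*(-x₁/y₁)) by ring, padicNorm.neg, padicNorm.mul,
      padicNorm.div, hD1, div_one]
    calc ν N * ν (-x₁/y₁) ≤ c⁻¹^2 * c⁻¹ :=
      mul_le_mul hN ht₁ (padicNorm.nonneg _) (by positivity)
    _ = c⁻¹^3 := by ring
  · linear_combination hβy₁ - x₁ * hLβ

lemma tangent_package {a₁ a₂ a₃ a₄ a₆ x₁ y₁ c : ℚ}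
    (h1 : ν a₁ ≤ 1) (h2 : ν a₂ ≤ 1) (h3 : ν a₃ ≤ 1) (h4 : ν a₄ ≤ 1) (h6 : ν a₆ ≤ 1)
    (hc : 1 < c)
    (e₁ : y₁ ^ 2 + a₁ * x₁ * y₁ + a₃ * y₁ = x₁ ^ 3 + a₂ * x₁ ^ 2 + a₄ * x₁ + a₆)
    (hx₁ : c^2 ≤ ν x₁)
    (hDL : y₁ - (-y₁ - a₁*x₁ - a₃) ≠ 0) :
    ∃ α β : ℚ, ν α ≤ c⁻¹^2 ∧ ν β ≤ c⁻¹^3 ∧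
      ((3*x₁^2 + 2*a₂*x₁ + a₄ - a₁*y₁)/(y₁ - (-y₁ - a₁*x₁ - a₃))) * β = α ∧
      β * (y₁ - ((3*x₁^2 + 2*a₂*x₁ + a₄ - a₁*y₁)/(y₁ - (-y₁ - a₁*x₁ - a₃))) * x₁) = -1 := by
  have hc0 : 0 < c := lt_trans one_pos hc
  have hd0 : 0 < c⁻¹ := inv_pos.mpr hc0
  have hcd : c * c⁻¹ = 1 := mul_inv_cancel₀ (ne_of_gt hc0)
  have hd1 : c⁻¹ < 1 := ar_dlt1 hc hcd hd0
  obtain ⟨hy₁, ht₁, hs₁⟩ := region_facts h1 h2 h3 h4 h6 hc e₁ hx₁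
  obtain ⟨N, D, hN, hD1, hD0, hNdef, hDdef⟩ := tangent_ts h1 h2 h3 h4 h6 hd0 hd1 ht₁ hs₁
  have hN2 : y₁^2 * N = 3*x₁^2 + 2*a₂*x₁ + a₄ - a₁*y₁ := by
    rw [hNdef]
    field_simp
    ring
  have hD2 : y₁^2 * D = y₁^2 + a₁*x₁*y₁ + 2*a₃*y₁ - a₂*x₁^2 - 2*a₄*x₁ - 3*a₆ := by
    rw [hDdef]
    field_simp
    ring
  have hstep : y₁*(y₁ - (-y₁ - a₁*x₁ - a₃)) - (3*x₁^2 + 2*a₂*x₁ + a₄ - a₁*y₁)*x₁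
      + (y₁^2 + a₁*x₁*y₁ + 2*a₃*y₁ - a₂*x₁^2 - 2*a₄*x₁ - 3*a₆) = 0 := by
    linear_combination 3*e₁
  have hγ : y₁^2 * (N * (y₁*(y₁ - (-y₁ - a₁*x₁ - a₃)) - (3*x₁^2 + 2*a₂*x₁ + a₄ - a₁*y₁)*x₁))
      = y₁^2 * (-(3*x₁^2 + 2*a₂*x₁ + a₄ - a₁*y₁) * D) := by
    calc y₁^2 * (N * (y₁*(y₁ - (-y₁ - a₁*x₁ - a₃)) - (3*x₁^2 + 2*a₂*x₁ + a₄ - a₁*y₁)*x₁))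
        = (y₁^2*N) * (y₁*(y₁ - (-y₁ - a₁*x₁ - a₃)) - (3*x₁^2 + 2*a₂*x₁ + a₄ - a₁*y₁)*x₁) := by
          ring
    _ = (3*x₁^2 + 2*a₂*x₁ + a₄ - a₁*y₁)
        * (-(y₁^2 + a₁*x₁*y₁ + 2*a₃*y₁ - a₂*x₁^2 - 2*a₄*x₁ - 3*a₆)) := by
          rw [hN2]
          linear_combination (3*x₁^2 + 2*a₂*x₁ + a₄ - a₁*y₁) * hstep
    _ = -(3*x₁^2 + 2*a₂*x₁ + a₄ - a₁*y₁) * (y₁^2*D) := by rw [hD2]; ring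
    _ = y₁^2 * (-(3*x₁^2 + 2*a₂*x₁ + a₄ - a₁*y₁) * D) := by ring
  have hND : N * (y₁*(y₁ - (-y₁ - a₁*x₁ - a₃)) - (3*x₁^2 + 2*a₂*x₁ + a₄ - a₁*y₁)*x₁)
      = -(3*x₁^2 + 2*a₂*x₁ + a₄ - a₁*y₁) * D :=
    mul_left_cancel₀ (pow_ne_zero 2 hy₁) hγ
  have hcore : (N/D) * (y₁ - ((3*x₁^2 + 2*a₂*x₁ + a₄ - a₁*y₁)/(y₁ - (-y₁ - a₁*x₁ - a₃))) * x₁)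
      = -((3*x₁^2 + 2*a₂*x₁ + a₄ - a₁*y₁)/(y₁ - (-y₁ - a₁*x₁ - a₃))) := by
    have hrew : y₁ - ((3*x₁^2 + 2*a₂*x₁ + a₄ - a₁*y₁)/(y₁ - (-y₁ - a₁*x₁ - a₃))) * x₁
        = (y₁*(y₁ - (-y₁ - a₁*x₁ - a₃)) - (3*x₁^2 + 2*a₂*x₁ + a₄ - a₁*y₁)*x₁)
          / (y₁ - (-y₁ - a₁*x₁ - a₃)) := by
      rw [eq_div_iff hDL, sub_mul, div_mul_eq_mul_div, div_mul_cancel₀ _ hDL]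
    rw [hrew, div_mul_div_comm, show -((3*x₁^2 + 2*a₂*x₁ + a₄ - a₁*y₁)/(y₁ - (-y₁ - a₁*x₁ - a₃)))
      = (-(3*x₁^2 + 2*a₂*x₁ + a₄ - a₁*y₁))/(y₁ - (-y₁ - a₁*x₁ - a₃)) by rw [neg_div],
      div_eq_div_iff (mul_ne_zero hD0 hDL) hDL]
    linear_combination (y₁ - (-y₁ - a₁*x₁ - a₃)) * hND
  have hβy₁ : (-1/y₁ - (N/D)*(-x₁/y₁)) * y₁ = (N/D)*x₁ - 1 := by
    field_simp
    ring
  have hLβ : ((3*x₁^2 + 2*a₂*x₁ + a₄ - a₁*y₁)/(y₁ - (-y₁ - a₁*x₁ - a₃)))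
      * (-1/y₁ - (N/D)*(-x₁/y₁)) = N/D := by
    apply mul_left_cancel₀ hy₁
    calc y₁ * (((3*x₁^2 + 2*a₂*x₁ + a₄ - a₁*y₁)/(y₁ - (-y₁ - a₁*x₁ - a₃)))
          * (-1/y₁ - (N/D)*(-x₁/y₁)))
        = ((3*x₁^2 + 2*a₂*x₁ + a₄ - a₁*y₁)/(y₁ - (-y₁ - a₁*x₁ - a₃)))
          * ((-1/y₁ - (N/D)*(-x₁/y₁)) * y₁) := by ring
    _ = ((3*x₁^2 + 2*a₂*x₁ + a₄ - a₁*y₁)/(y₁ - (-y₁ - a₁*x₁ - a₃))) * ((N/D)*x₁ - 1) := by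
          rw [hβy₁]
    _ = y₁ * (N/D) := by linear_combination -hcore
  refine ⟨N/D, -1/y₁ - (N/D)*(-x₁/y₁), ?_, ?_, hLβ, ?_⟩
  · rw [padicNorm.div, hD1, div_one]; exact hN
  · rw [sub_eq_add_neg]
    apply pnAddLe hs₁
    rw [show -((N/D)*(-x₁/y₁)) = -(N/D*(-x₁/y₁)) by ring, padicNorm.neg, padicNorm.mul,
      padicNorm.div, hD1, div_one]
    calc ν N * ν (-x₁/y₁) ≤ c⁻¹^2 * c⁻¹ :=
      mul_le_mul hN ht₁ (padicNorm.nonneg _) (by positivity)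
    _ = c⁻¹^3 := by ring
  · linear_combination hβy₁ - x₁ * hLβ

end PadicSection

/-- The elliptic curve over `ℚ` given by a Weierstrass equation
`y² + a₁xy + a₃y = x³ + a₂x² + a₄x + a₆` with integer coefficients. -/
noncomputable def curveQ (a₁ a₂ a₃ a₄ a₆ : ℤ) : WeierstrassCurve.Affine ℚ :=
  { a₁ := (a₁ : ℚ), a₂ := (a₂ : ℚ), a₃ := (a₃ : ℚ), a₄ := (a₄ : ℚ), a₆ := (a₆ : ℚ) }

/-- The x-coordinate of a point (with junk value `0` at the point at infinity). -/
noncomputable def xCoord {F : Type} [Field F] {W : WeierstrassCurve.Affine F} :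
    W.Point → F
  | .zero => 0
  | @WeierstrassCurve.Affine.Point.some _ _ _ x _ _ => x

/-- The y-coordinate of a point (with junk value `0` at the point at infinity). -/
noncomputable def yCoord {F : Type} [Field F] {W : WeierstrassCurve.Affine F} :
    W.Point → F
  | .zero => 0
  | @WeierstrassCurve.Affine.Point.some _ _ _ _ y _ => y

section PadicSection2
variable {p : ℕ} [hp : Fact p.Prime]

local notation "ν" => padicNorm p

open WeierstrassCurve.Affine WeierstrassCurve.Affine.Point in
lemma region_add {W : WeierstrassCurve.Affine ℚ}
    (h1 : ν W.a₁ ≤ 1) (h2 : ν W.a₂ ≤ 1) (h3 : ν W.a₃ ≤ 1) (h4 : ν W.a₄ ≤ 1) (h6 : ν W.a₆ ≤ 1)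
    {c : ℚ} (hc : 1 < c)
    (P Q : W.Point)
    (hP : P = 0 ∨ c^2 ≤ ν (xCoord P)) (hQ : Q = 0 ∨ c^2 ≤ ν (xCoord Q)) :
    P + Q = 0 ∨ c^2 ≤ ν (xCoord (P + Q)) := by
  cases P with
  | zero => rw [← zero_def, zero_add]; exact hQ
  | @some x₁ y₁ h₁ =>
    cases Q with
    | zero => rw [← zero_def, add_zero]; exact hP
    | @some x₂ y₂ h₂ =>
      have hx₁ : c^2 ≤ ν x₁ := hP.resolve_left (some_ne_zero h₁)
      have hx₂ : c^2 ≤ ν x₂ := hQ.resolve_left (some_ne_zero h₂)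
      by_cases hxy : x₁ = x₂ ∧ y₁ = W.negY x₂ y₂
      · left
        exact add_of_Y_eq hxy.1 hxy.2
      · have hxy' : x₁ = x₂ → y₁ ≠ W.negY x₂ y₂ := fun hx hy => hxy ⟨hx, hy⟩
        right
        rw [add_some hxy]
        show c^2 ≤ ν (W.addX x₁ x₂ (W.slope x₁ x₂ y₁ y₂))
        have e₁ : y₁ ^ 2 + W.a₁ * x₁ * y₁ + W.a₃ * y₁
            = x₁ ^ 3 + W.a₂ * x₁ ^ 2 + W.a₄ * x₁ + W.a₆ := (W.equation_iff x₁ y₁).mp h₁.1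
        have e₂ : y₂ ^ 2 + W.a₁ * x₂ * y₂ + W.a₃ * y₂
            = x₂ ^ 3 + W.a₂ * x₂ ^ 2 + W.a₄ * x₂ + W.a₆ := (W.equation_iff x₂ y₂).mp h₂.1
        set L : ℚ := W.slope x₁ x₂ y₁ y₂ with hL
        have e₃ : (W.negAddY x₁ x₂ y₁ L) ^ 2 + W.a₁ * (W.addX x₁ x₂ L) * (W.negAddY x₁ x₂ y₁ L)
            + W.a₃ * (W.negAddY x₁ x₂ y₁ L)
            = (W.addX x₁ x₂ L) ^ 3 + W.a₂ * (W.addX x₁ x₂ L) ^ 2 + W.a₄ * (W.addX x₁ x₂ L)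
              + W.a₆ := by
          rw [hL]
          exact (W.equation_iff _ _).mp (equation_negAdd h₁.1 h₂.1 hxy)
        have hline : W.negAddY x₁ x₂ y₁ L = L * (W.addX x₁ x₂ L) + (y₁ - L * x₁) := by
          rw [negAddY]; ring
        obtain ⟨α, β, hα, hβ, hLβ, hβμ⟩ :
            ∃ α β : ℚ, ν α ≤ c⁻¹^2 ∧ ν β ≤ c⁻¹^3 ∧ L * β = α ∧ β * (y₁ - L * x₁) = -1 := by
          by_cases hx : x₁ = x₂
          · have hy := hxy' hx
            obtain (hyy | hyn) := Y_eq_of_X_eq h₁.1 h₂.1 hx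
            · have hDL : y₁ - (-y₁ - W.a₁*x₁ - W.a₃) ≠ 0 := by
                have hnegY : W.negY x₂ y₂ = -y₁ - W.a₁*x₁ - W.a₃ := by
                  rw [negY, ← hx, ← hyy]
                rw [← hnegY]
                exact sub_ne_zero.mpr hy
              obtain ⟨α, β, hα, hβ, hLβ, hβμ⟩ :=
                tangent_package h1 h2 h3 h4 h6 hc e₁ hx₁ hDL
              refine ⟨α, β, hα, hβ, ?_, ?_⟩
              · rw [hL, slope_of_Y_ne hx hy]
                rw [show W.negY x₁ y₁ = -y₁ - W.a₁*x₁ - W.a₃ from rfl]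
                exact hLβ
              · rw [hL, slope_of_Y_ne hx hy]
                rw [show W.negY x₁ y₁ = -y₁ - W.a₁*x₁ - W.a₃ from rfl]
                exact hβμ
            · exact absurd hyn hy
          · obtain ⟨α, β, hα, hβ, hLβ, hβμ⟩ :=
              chord_package h1 h2 h3 h4 h6 hc e₁ e₂ hx₁ hx₂ hx
            refine ⟨α, β, hα, hβ, ?_, ?_⟩
            · rw [hL, slope_of_X_ne hx]; exact hLβ
            · rw [hL, slope_of_X_ne hx]; exact hβμ
        exact third_point_bound h1 h2 h3 h4 h6 hc hα hβ hLβ hβμ hline e₃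

open WeierstrassCurve.Affine WeierstrassCurve.Affine.Point in
lemma den_factorization_le {W : WeierstrassCurve.Affine ℚ}
    (h1 : ν W.a₁ ≤ 1) (h2 : ν W.a₂ ≤ 1) (h3 : ν W.a₃ ≤ 1) (h4 : ν W.a₄ ≤ 1) (h6 : ν W.a₆ ≤ 1)
    (P : W.Point) (hP : P ≠ 0) (k : ℕ) (hkP : k • P ≠ 0) :
    (xCoord P).den.factorization p ≤ (xCoord (k • P)).den.factorization p := by
  by_cases hm : (xCoord P).den.factorization p = 0
  · rw [hm]; exact Nat.zero_le _
  cases P with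
  | zero => exact absurd zero_def hP
  | @some x y h₁ =>
    have hxc : xCoord (Point.some _ _ h₁) = x := rfl
    rw [hxc] at hm ⊢
    have hp : p.Prime := Fact.out
    have hp1 : (1:ℚ) < p := by exact_mod_cast hp.one_lt
    have hx0 : x ≠ 0 := fun h => hm (by simp [h])
    have hpd : p ∣ x.den := Nat.dvd_of_factorization_pos hm
    have hpn : ¬ (p:ℤ) ∣ x.num := by
      intro hdvd
      have hd1 : p ∣ x.num.natAbs := by
        have := Int.natAbs_dvd_natAbs.mpr hdvd
        simpa using this
      have hgcd : p ∣ Nat.gcd x.num.natAbs x.den := Nat.dvd_gcd hd1 hpd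
      rw [x.reduced] at hgcd
      exact hp.ne_one (Nat.dvd_one.mp hgcd)
    have hval : padicValRat p x = -(x.den.factorization p : ℤ) := by
      have hdef : padicValRat p x = (padicValInt p x.num : ℤ) - (padicValNat p x.den : ℤ) := rfl
      rw [hdef, padicValInt.eq_zero_of_not_dvd hpn, Nat.factorization_def x.den hp]
      simp
    have hnorm : ν x = (p:ℚ) ^ ((x.den.factorization p : ℤ)) := by
      rw [padicNorm.eq_zpow_of_nonzero hx0, hval, neg_neg]
    have hx1 : 1 < ν x := by
      rw [hnorm, show (1:ℚ) = (p:ℚ)^(0:ℤ) by simp, zpow_lt_zpow_iff_right₀ hp1]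
      · exact_mod_cast Nat.pos_of_ne_zero hm
    have e₁ : y ^ 2 + W.a₁ * x * y + W.a₃ * y
        = x ^ 3 + W.a₂ * x ^ 2 + W.a₄ * x + W.a₆ := (W.equation_iff x y).mp h₁.1
    obtain ⟨hxylt, hy2⟩ := norm_y_of_big_x h1 h2 h3 h4 h6 e₁ hx1
    have hy0 : 0 < ν y := lt_trans (lt_trans one_pos hx1) hxylt
    have hyne : y ≠ 0 := fun h => by rw [h, padicNorm.zero] at hy0; exact lt_irrefl 0 hy0
    obtain ⟨z, hz⟩ := padicNorm.values_discrete (p := p) hyne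
    -- parity : the exponent m is even
    have hmz : 3 * (x.den.factorization p : ℤ) = -z * 2 := by
      have h30 : (p:ℚ) ^ ((-z) * ((2:ℕ):ℤ)) = (p:ℚ) ^ ((x.den.factorization p : ℤ) * ((3:ℕ):ℤ)) := by
        rw [zpow_mul, zpow_mul, zpow_natCast, zpow_natCast, ← hz, ← hnorm]
        exact hy2
      have h31 := zpow_right_injective₀ (a := (p:ℚ)) (by positivity) (ne_of_gt hp1) h30
      push_cast at h31
      linarith
    set nZ : ℤ := -z - (x.den.factorization p : ℤ) with hnZ
    have hmn : (x.den.factorization p : ℤ) = 2 * nZ := by rw [hnZ]; linarith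
    have hnZ1 : 1 ≤ nZ := by
      have : 1 ≤ (x.den.factorization p : ℤ) := by exact_mod_cast Nat.pos_of_ne_zero hm
      omega
    set c : ℚ := (p:ℚ) ^ nZ with hcdef
    have hc : 1 < c := by
      rw [hcdef, show (1:ℚ) = (p:ℚ)^(0:ℤ) by simp, zpow_lt_zpow_iff_right₀ hp1]
      omega
    have hc2 : c ^ 2 = ν x := by
      rw [hcdef, hnorm, show c ^ 2 = c ^ (2:ℤ) by rw [zpow_two, sq], hcdef, ← zpow_mul]
      congr 1
      omega
    have hreg : ∀ j : ℕ, j • (Point.some _ _ h₁) = 0 ∨ c^2 ≤ ν (xCoord (j • (Point.some _ _ h₁))) := by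
      intro j
      induction j with
      | zero => left; exact zero_nsmul _
      | succ j ih =>
        rw [succ_nsmul]
        exact region_add h1 h2 h3 h4 h6 hc _ _ ih (Or.inr (by rw [hxc, ← hc2]))
    have hb : c^2 ≤ ν (xCoord (k • (Point.some _ _ h₁))) := (hreg k).resolve_left hkP
    set q : ℚ := xCoord (k • (Point.some _ _ h₁)) with hqdef
    have hq0 : q ≠ 0 := by
      intro h
      rw [h, padicNorm.zero] at hb
      nlinarith
    have hno : ν q = (p:ℚ) ^ (-padicValRat p q) := padicNorm.eq_zpow_of_nonzero hq0
    have hle : (x.den.factorization p : ℤ) ≤ -padicValRat p q := by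
      rw [← zpow_le_zpow_iff_right₀ hp1, ← hno, ← hnorm, ← hc2]
      exact hb
    by_cases hqd : p ∣ q.den
    · have hqn : ¬ (p:ℤ) ∣ q.num := by
        intro hdvd
        have hd1 : p ∣ q.num.natAbs := by
          have := Int.natAbs_dvd_natAbs.mpr hdvd
          simpa using this
        have hgcd : p ∣ Nat.gcd q.num.natAbs q.den := Nat.dvd_gcd hd1 hqd
        rw [q.reduced] at hgcd
        exact hp.ne_one (Nat.dvd_one.mp hgcd)
      have hw : padicValRat p q = -(padicValNat p q.den : ℤ) := by
        have hdef : padicValRat p q = (padicValInt p q.num : ℤ) - (padicValNat p q.den : ℤ) := rfl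
        rw [hdef, padicValInt.eq_zero_of_not_dvd hqn]
        simp
      rw [hw] at hle
      rw [Nat.factorization_def q.den hp]
      exact_mod_cast (by omega : (x.den.factorization p : ℤ) ≤ (padicValNat p q.den : ℤ))
    · exfalso
      have hd0 : padicValNat p q.den = 0 := padicValNat.eq_zero_of_not_dvd hqd
      have hw : padicValRat p q = (padicValInt p q.num : ℤ) := by
        have hdef : padicValRat p q = (padicValInt p q.num : ℤ) - (padicValNat p q.den : ℤ) := rfl
        rw [hdef, hd0]
        simp
      have hnn : (0:ℤ) ≤ (padicValInt p q.num : ℤ) := by exact_mod_cast Nat.zero_le _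
      rw [hw] at hle
      have : 1 ≤ (x.den.factorization p : ℤ) := by exact_mod_cast Nat.pos_of_ne_zero hm
      omega

end PadicSection2

/-- If `P` is an affine rational point on an elliptic curve over `ℚ` with integer
coefficients and `k ≥ 1` is such that `k•P` is also affine, then `den(x(P))` divides
`den(x(k•P))`; equivalently `v_p(den(x(P))) ≤ v_p(den(x(k•P)))` for every prime `p`. -/
theorem den_dvd_den_smul (a₁ a₂ a₃ a₄ a₆ : ℤ)
    (P : (curveQ a₁ a₂ a₃ a₄ a₆).Point) (hP : P ≠ 0)
    (k : ℕ) (hk : 1 ≤ k) (hkP : k • P ≠ 0) :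
    (xCoord P).den ∣ (xCoord (k • P)).den ∧
      ∀ p : ℕ, p.Prime →
        (xCoord P).den.factorization p ≤ (xCoord (k • P)).den.factorization p := by
  have key : ∀ p : ℕ, p.Prime →
      (xCoord P).den.factorization p ≤ (xCoord (k • P)).den.factorization p := by
    intro p hp
    haveI := Fact.mk hp
    exact den_factorization_le (padicNorm.of_int a₁) (padicNorm.of_int a₂)
      (padicNorm.of_int a₃) (padicNorm.of_int a₄) (padicNorm.of_int a₆) P hP k hkP
  refine ⟨?_, key⟩
  rw [← Nat.factorization_le_iff_dvd (Rat.den_pos _).ne' (Rat.den_pos _).ne']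
  rw [Finsupp.le_def]
  intro a
  by_cases ha : a.Prime
  · exact key a ha
  · rw [Nat.factorization_eq_zero_of_not_prime _ ha]
    exact Nat.zero_le _
end

section
/- Let E be an elliptic curve over ℚ given by a Weierstrass equation with integer coefficients and let P ∈ E(ℚ) be a non-torsion point. Then for all integers m, n ≥ 1 and every prime p, v_p(den(x(gcd(m,n)•P))) = min( v_p(den(x(m•P))), v_p(den(x(n•P))) ). -/
set_option linter.unusedSectionVars false
set_option maxHeartbeats 1000000
open WithTop


set_option linter.unusedSectionVars false
open WithTop

noncomputable def V (p : ℕ) (q : ℚ) : WithTop ℤ := if q = 0 then ⊤ else (padicValRat p q : WithTop ℤ)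

variable {p : ℕ} [hp : Fact p.Prime]

lemma V_zero : V p 0 = ⊤ := if_pos rfl
lemma V_of_ne {q : ℚ} (h : q ≠ 0) : V p q = (padicValRat p q : WithTop ℤ) := if_neg h
lemma V_eq_top_iff {q : ℚ} : V p q = ⊤ ↔ q = 0 := by
  constructor
  · intro h; by_contra hq; rw [V_of_ne hq] at h; exact (WithTop.coe_ne_top h)
  · intro h; rw [h]; exact V_zero
lemma V_ne_top {q : ℚ} (h : q ≠ 0) : V p q ≠ ⊤ := by rw [V_of_ne h]; exact WithTop.coe_ne_top
lemma V_one : V p 1 = 0 := by rw [V_of_ne one_ne_zero, padicValRat.one]; rfl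
lemma V_neg (q : ℚ) : V p (-q) = V p q := by
  rcases eq_or_ne q 0 with rfl | h
  · simp
  · rw [V_of_ne (neg_ne_zero.mpr h), V_of_ne h, padicValRat.neg]
lemma V_mul {q r : ℚ} : V p (q * r) = V p q + V p r := by
  rcases eq_or_ne q 0 with rfl | hq
  · simp [V_zero]
  rcases eq_or_ne r 0 with rfl | hr
  · simp [V_zero]
  rw [V_of_ne hq, V_of_ne hr, V_of_ne (mul_ne_zero hq hr), padicValRat.mul hq hr]
  exact_mod_cast WithTop.coe_add _ _
lemma V_min_le_add {q r : ℚ} : min (V p q) (V p r) ≤ V p (q + r) := by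
  rcases eq_or_ne q 0 with rfl | hq
  · simp
  rcases eq_or_ne r 0 with rfl | hr
  · simp
  rcases eq_or_ne (q + r) 0 with h | h
  · rw [V_eq_top_iff.mpr h]; exact le_top
  rw [V_of_ne hq, V_of_ne hr, V_of_ne h]
  have := padicValRat.min_le_padicValRat_add (p := p) h
  exact_mod_cast this
lemma V_add_ge {q r : ℚ} {c : WithTop ℤ} (hq : c ≤ V p q) (hr : c ≤ V p r) : c ≤ V p (q + r) :=
  le_trans (le_min hq hr) V_min_le_add
lemma V_add_eq_left {q r : ℚ} (h : V p q < V p r) : V p (q + r) = V p q := by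
  apply le_antisymm
  · by_contra hc
    push_neg at hc
    have h3 : (q + r) + (-r) = q := by ring
    have h4 := V_min_le_add (p := p) (q := q + r) (r := -r)
    rw [h3, V_neg] at h4
    rcases min_le_iff.mp h4 with h' | h'
    · exact absurd (lt_of_lt_of_le hc h') (lt_irrefl _)
    · exact absurd (lt_of_lt_of_le h h') (lt_irrefl _)
  · exact V_add_ge le_rfl h.le
lemma V_intCast_nonneg (n : ℤ) : 0 ≤ V p ((n : ℚ)) := by
  rcases eq_or_ne n 0 with rfl | h
  · simp [V_zero]
  · rw [V_of_ne (by exact_mod_cast h), padicValRat.of_int]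
    exact_mod_cast Int.ofNat_nonneg _
lemma V_mul_ge {q r : ℚ} {c d : WithTop ℤ} (hq : c ≤ V p q) (hr : d ≤ V p r) :
    c + d ≤ V p (q * r) := by rw [V_mul]; exact add_le_add hq hr
lemma V_mul_ge' {q r : ℚ} {a b : ℤ} (hq : (a : WithTop ℤ) ≤ V p q) (hr : (b : WithTop ℤ) ≤ V p r) :
    ((a + b : ℤ) : WithTop ℤ) ≤ V p (q * r) := by
  rw [WithTop.coe_add]; exact V_mul_ge hq hr
lemma V_mono {q : ℚ} {a b : ℤ} (h2 : (a : WithTop ℤ) ≤ V p q) (h : b ≤ a) :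
    (b : WithTop ℤ) ≤ V p q := le_trans (by exact_mod_cast h) h2
lemma V_mono0 {q : ℚ} {a : ℤ} (h2 : (a : WithTop ℤ) ≤ V p q) (h : 0 ≤ a) :
    0 ≤ V p q := le_trans (by exact_mod_cast h) h2
lemma V_c0 {q : ℚ} (h : 0 ≤ V p q) : ((0 : ℤ) : WithTop ℤ) ≤ V p q := by exact_mod_cast h
lemma V_mul_eq {q r : ℚ} {a b : ℤ} (hq : V p q = a) (hr : V p r = b) :
    V p (q * r) = ((a + b : ℤ) : WithTop ℤ) := by
  rw [V_mul, hq, hr]; exact (WithTop.coe_add a b).symm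
lemma V_inv_eq {q : ℚ} {a : ℤ} (hq : V p q = a) : V p q⁻¹ = ((-a : ℤ) : WithTop ℤ) := by
  have h : q ≠ 0 := by intro h0; rw [h0, V_zero] at hq; exact (WithTop.coe_ne_top hq.symm)
  rw [V_of_ne (inv_ne_zero h), padicValRat.inv]
  rw [V_of_ne h] at hq
  have : padicValRat p q = a := by exact_mod_cast hq
  rw [this]
lemma V_ne_zero_of_lt {q : ℚ} {a : WithTop ℤ} (h : V p q < a) : q ≠ 0 := by
  intro h0; rw [h0, V_zero] at h; exact not_top_lt h
lemma V_ne_zero_of_coe {q : ℚ} {a : ℤ} (h : V p q = (a : WithTop ℤ)) : q ≠ 0 := by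
  intro h0; rw [h0, V_zero] at h; exact (WithTop.coe_ne_top h.symm)
lemma V_coe {q : ℚ} (hq : q ≠ 0) : ∃ a : ℤ, V p q = (a : WithTop ℤ) := ⟨_, V_of_ne hq⟩
lemma V_coe_lt_coe {a b : ℤ} (h : a < b) : (a : WithTop ℤ) < (b : WithTop ℤ) := by exact_mod_cast h

lemma trichot {A1 A2 A3 A4 A6 x y : ℚ}
    (hA1 : 0 ≤ V p A1) (hA2 : 0 ≤ V p A2) (hA3 : 0 ≤ V p A3)
    (hA4 : 0 ≤ V p A4) (hA6 : 0 ≤ V p A6)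
    (heq : y^2 + A1*x*y + A3*y = x^3 + A2*x^2 + A4*x + A6) :
    (0 ≤ V p x ∧ 0 ≤ V p y) ∨
      ∃ s : ℤ, 1 ≤ s ∧ V p x = ((-2*s : ℤ) : WithTop ℤ) ∧ V p y = ((-3*s : ℤ) : WithTop ℤ) := by
  by_cases hx0 : 0 ≤ V p x
  · left
    refine ⟨hx0, ?_⟩
    by_contra hy0
    push_neg at hy0
    have hy : y ≠ 0 := V_ne_zero_of_lt hy0
    obtain ⟨vy, hvy⟩ := V_coe (p := p) hy
    have hvy0 : vy < 0 := by rw [hvy] at hy0; exact_mod_cast hy0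
    have heq' : y^2 + (A1*x*y + A3*y) = x^3 + A2*x^2 + A4*x + A6 := by linear_combination heq
    have h1 : V p (y^2) = ((vy + vy : ℤ) : WithTop ℤ) := by
      rw [pow_two]; exact V_mul_eq hvy hvy
    have h2 : (vy : WithTop ℤ) ≤ V p (A1*x*y + A3*y) := by
      apply V_add_ge
      · have hb : ((0 + (0 + vy) : ℤ) : WithTop ℤ) ≤ V p (A1*(x*y)) :=
          V_mul_ge' (V_c0 hA1) (V_mul_ge' (V_c0 hx0) hvy.ge)
        rw [mul_assoc]
        exact V_mono hb (by omega)
      · exact V_mono (V_mul_ge' (V_c0 hA3) hvy.ge) (by omega)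
    have hlhs : V p (y^2 + (A1*x*y + A3*y)) = ((vy + vy : ℤ) : WithTop ℤ) := by
      rw [V_add_eq_left, h1]
      rw [h1]
      exact lt_of_lt_of_le (V_coe_lt_coe (by omega)) h2
    have hrhs : 0 ≤ V p (x^3 + A2*x^2 + A4*x + A6) := by
      apply V_add_ge (V_add_ge (V_add_ge ?_ ?_) ?_) hA6
      · rw [pow_succ, pow_two]
        exact V_mono0 (V_mul_ge' (V_mul_ge' (V_c0 hx0) (V_c0 hx0)) (V_c0 hx0)) le_rfl
      · rw [pow_two]
        exact V_mono0 (V_mul_ge' (V_c0 hA2) (V_mul_ge' (V_c0 hx0) (V_c0 hx0))) le_rfl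
      · exact V_mono0 (V_mul_ge' (V_c0 hA4) (V_c0 hx0)) le_rfl
    rw [heq'] at hlhs
    rw [hlhs] at hrhs
    have : (0:ℤ) ≤ vy + vy := by exact_mod_cast hrhs
    omega
  · right
    push_neg at hx0
    have hx : x ≠ 0 := V_ne_zero_of_lt hx0
    obtain ⟨vx, hvx⟩ := V_coe (p := p) hx
    have hvx0 : vx < 0 := by rw [hvx] at hx0; exact_mod_cast hx0
    have heq' : y^2 + (A1*x*y + A3*y) = x^3 + (A2*x^2 + A4*x + A6) := by linear_combination heq
    have hx3 : V p (x^3) = ((vx + vx + vx : ℤ) : WithTop ℤ) := by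
      rw [pow_succ, pow_two]
      exact V_mul_eq (V_mul_eq hvx hvx) hvx
    have hrest : ((vx + vx : ℤ) : WithTop ℤ) ≤ V p (A2*x^2 + A4*x + A6) := by
      apply V_add_ge (V_add_ge ?_ ?_) (V_mono (V_c0 hA6) (by omega))
      · rw [pow_two]
        exact V_mono (V_mul_ge' (V_c0 hA2) (V_mul_ge' hvx.ge hvx.ge)) (by omega)
      · exact V_mono (V_mul_ge' (V_c0 hA4) hvx.ge) (by omega)
    have hrhs : V p (x^3 + (A2*x^2 + A4*x + A6)) = ((vx + vx + vx : ℤ) : WithTop ℤ) := by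
      rw [V_add_eq_left, hx3]
      rw [hx3]
      exact lt_of_lt_of_le (V_coe_lt_coe (by omega)) hrest
    have hyx : V p y < (vx : WithTop ℤ) := by
      by_contra hc
      push_neg at hc
      have hlhs : ((vx + vx : ℤ) : WithTop ℤ) ≤ V p (y^2 + (A1*x*y + A3*y)) := by
        apply V_add_ge
        · rw [pow_two]; exact V_mul_ge' hc hc
        · apply V_add_ge
          · rw [mul_assoc]
            exact V_mono (V_mul_ge' (V_c0 hA1) (V_mul_ge' hvx.ge hc)) (by omega)
          · exact V_mono (V_mul_ge' (V_c0 hA3) hc) (by omega)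
      rw [heq', hrhs] at hlhs
      have : vx + vx ≤ vx + vx + vx := by exact_mod_cast hlhs
      omega
    have hy : y ≠ 0 := V_ne_zero_of_lt hyx
    obtain ⟨vy, hvy⟩ := V_coe (p := p) hy
    have hvyx : vy < vx := by rw [hvy] at hyx; exact_mod_cast hyx
    have h1 : V p (y^2) = ((vy + vy : ℤ) : WithTop ℤ) := by rw [pow_two]; exact V_mul_eq hvy hvy
    have h2 : ((vx + vy : ℤ) : WithTop ℤ) ≤ V p (A1*x*y + A3*y) := by
      apply V_add_ge
      · rw [mul_assoc]
        exact V_mono (V_mul_ge' (V_c0 hA1) (V_mul_ge' hvx.ge hvy.ge)) (by omega)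
      · exact V_mono (V_mul_ge' (V_c0 hA3) hvy.ge) (by omega)
    have hlhs : V p (y^2 + (A1*x*y + A3*y)) = ((vy + vy : ℤ) : WithTop ℤ) := by
      rw [V_add_eq_left, h1]
      rw [h1]
      exact lt_of_lt_of_le (V_coe_lt_coe (by omega)) h2
    rw [heq', hrhs] at hlhs
    have hkey : vx + vx + vx = vy + vy := by exact_mod_cast hlhs
    refine ⟨vx - vy, by omega, ?_, ?_⟩
    · rw [hvx]; congr 1; omega
    · rw [hvy]; congr 1; omega

lemma V_succ_le_of_lt {q : ℚ} {a : ℤ} (h : (a : WithTop ℤ) < V p q) :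
    ((a + 1 : ℤ) : WithTop ℤ) ≤ V p q := by
  rcases eq_or_ne q 0 with rfl | hq
  · rw [V_zero]; exact le_top
  · obtain ⟨b, hb⟩ := V_coe (p := p) hq
    rw [hb] at h ⊢
    exact_mod_cast (by exact_mod_cast h : a < b)

lemma caseA {A1 A2 A3 A4 A6 x₁ y₁ x₂ y₂ L : ℚ} {t s₁ s₂ : ℤ}
    (hA1 : 0 ≤ V p A1) (hA2 : 0 ≤ V p A2) (hA3 : 0 ≤ V p A3) (hA4 : 0 ≤ V p A4)
    (hA6 : 0 ≤ V p A6) (ht : 1 ≤ t)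
    (heq₁ : y₁^2 + A1*x₁*y₁ + A3*y₁ = x₁^3 + A2*x₁^2 + A4*x₁ + A6)
    (heq₂ : y₂^2 + A1*x₂*y₂ + A3*y₂ = x₂^3 + A2*x₂^2 + A4*x₂ + A6)
    (hs₁ : t ≤ s₁) (hs₂ : t ≤ s₂)
    (hVx₁ : V p x₁ = ((-2*s₁ : ℤ) : WithTop ℤ)) (hVy₁ : V p y₁ = ((-3*s₁ : ℤ) : WithTop ℤ))
    (hVx₂ : V p x₂ = ((-2*s₂ : ℤ) : WithTop ℤ)) (hVy₂ : V p y₂ = ((-3*s₂ : ℤ) : WithTop ℤ))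
    (hx : x₁ ≠ x₂) (hL : L = (y₁ - y₂)/(x₁ - x₂)) :
    ∃ l : ℚ, ((2*t : ℤ) : WithTop ℤ) ≤ V p l ∧ L = -((y₁ - L*x₁) * l) ∧
      V p (y₁ - L*x₁) ≤ ((-3*t : ℤ) : WithTop ℤ) ∧ y₁ - L*x₁ ≠ 0 := by
  have hy₁ : y₁ ≠ 0 := V_ne_zero_of_coe hVy₁
  have hy₂ : y₂ ≠ 0 := V_ne_zero_of_coe hVy₂
  obtain ⟨z₁, hz₁⟩ : ∃ X : ℚ, X = -(x₁/y₁) := ⟨_, rfl⟩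
  obtain ⟨z₂, hz₂⟩ : ∃ X : ℚ, X = -(x₂/y₂) := ⟨_, rfl⟩
  obtain ⟨w₁, hw₁⟩ : ∃ X : ℚ, X = -(1/y₁) := ⟨_, rfl⟩
  obtain ⟨w₂, hw₂⟩ : ∃ X : ℚ, X = -(1/y₂) := ⟨_, rfl⟩
  have hinv₁ : V p (y₁⁻¹) = ((3*s₁ : ℤ) : WithTop ℤ) := by
    have h := V_inv_eq (p := p) hVy₁; rw [h]; congr 1; ring
  have hinv₂ : V p (y₂⁻¹) = ((3*s₂ : ℤ) : WithTop ℤ) := by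
    have h := V_inv_eq (p := p) hVy₂; rw [h]; congr 1; ring
  have hVw₁ : V p w₁ = ((3*s₁ : ℤ) : WithTop ℤ) := by rw [hw₁, V_neg, one_div]; exact hinv₁
  have hVw₂ : V p w₂ = ((3*s₂ : ℤ) : WithTop ℤ) := by rw [hw₂, V_neg, one_div]; exact hinv₂
  have hVz₁ : V p z₁ = ((s₁ : ℤ) : WithTop ℤ) := by
    rw [hz₁, V_neg, div_eq_mul_inv, V_mul_eq hVx₁ hinv₁]; congr 1; ring
  have hVz₂ : V p z₂ = ((s₂ : ℤ) : WithTop ℤ) := by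
    rw [hz₂, V_neg, div_eq_mul_inv, V_mul_eq hVx₂ hinv₂]; congr 1; ring
  have Ezw₁ : w₁ = z₁^3 + A1*z₁*w₁ + A2*z₁^2*w₁ + A3*w₁^2 + A4*z₁*w₁^2 + A6*w₁^3 := by
    rw [hz₁, hw₁]
    field_simp
    linear_combination (-1) * heq₁
  have Ezw₂ : w₂ = z₂^3 + A1*z₂*w₂ + A2*z₂^2*w₂ + A3*w₂^2 + A4*z₂*w₂^2 + A6*w₂^3 := by
    rw [hz₂, hw₂]
    field_simp
    linear_combination (-1) * heq₂
  obtain ⟨A, hA⟩ : ∃ X : ℚ, X = z₁^2 + z₁*z₂ + z₂^2 + A1*w₂ + A2*((z₁+z₂)*w₂) + A4*w₂^2 := ⟨_, rfl⟩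
  set B : ℚ := -1 + (A1*z₁ + A2*z₁^2 + A3*(w₁+w₂) + A4*(z₁*(w₁+w₂)) + A6*(w₁^2 + w₁*w₂ + w₂^2))
    with hB
  have hID : A*(z₂ - z₁) + B*(w₂ - w₁) = 0 := by
    rw [hA, hB]
    linear_combination Ezw₁ - Ezw₂
  have hVA : ((2*t : ℤ) : WithTop ℤ) ≤ V p A := by
    rw [hA]
    apply V_add_ge (V_add_ge (V_add_ge (V_add_ge (V_add_ge ?_ ?_) ?_) ?_) ?_) ?_
    · rw [pow_two]; exact V_mono (V_mul_ge' hVz₁.ge hVz₁.ge) (by omega)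
    · exact V_mono (V_mul_ge' hVz₁.ge hVz₂.ge) (by omega)
    · rw [pow_two]; exact V_mono (V_mul_ge' hVz₂.ge hVz₂.ge) (by omega)
    · exact V_mono (V_mul_ge' (V_c0 hA1) hVw₂.ge) (by omega)
    · have h7 : ((t : ℤ) : WithTop ℤ) ≤ V p (z₁+z₂) :=
        V_add_ge (V_mono hVz₁.ge (by omega)) (V_mono hVz₂.ge (by omega))
      exact V_mono (V_mul_ge' (V_c0 hA2) (V_mul_ge' h7 hVw₂.ge)) (by omega)
    · rw [pow_two]; exact V_mono (V_mul_ge' (V_c0 hA4) (V_mul_ge' hVw₂.ge hVw₂.ge)) (by omega)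
  have hVBrest : ((1 : ℤ) : WithTop ℤ) ≤
      V p (A1*z₁ + A2*z₁^2 + A3*(w₁+w₂) + A4*(z₁*(w₁+w₂)) + A6*(w₁^2 + w₁*w₂ + w₂^2)) := by
    have hww : ((3*t : ℤ) : WithTop ℤ) ≤ V p (w₁ + w₂) :=
      V_add_ge (V_mono hVw₁.ge (by omega)) (V_mono hVw₂.ge (by omega))
    apply V_add_ge (V_add_ge (V_add_ge (V_add_ge ?_ ?_) ?_) ?_) ?_
    · exact V_mono (V_mul_ge' (V_c0 hA1) hVz₁.ge) (by omega)
    · rw [pow_two]; exact V_mono (V_mul_ge' (V_c0 hA2) (V_mul_ge' hVz₁.ge hVz₁.ge)) (by omega)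
    · exact V_mono (V_mul_ge' (V_c0 hA3) hww) (by omega)
    · exact V_mono (V_mul_ge' (V_c0 hA4) (V_mul_ge' hVz₁.ge hww)) (by omega)
    · have h8 : ((1 : ℤ) : WithTop ℤ) ≤ V p (w₁^2 + w₁*w₂ + w₂^2) := by
        apply V_add_ge (V_add_ge ?_ ?_) ?_
        · rw [pow_two]; exact V_mono (V_mul_ge' hVw₁.ge hVw₁.ge) (by omega)
        · exact V_mono (V_mul_ge' hVw₁.ge hVw₂.ge) (by omega)
        · rw [pow_two]; exact V_mono (V_mul_ge' hVw₂.ge hVw₂.ge) (by omega)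
      exact V_mono (V_mul_ge' (V_c0 hA6) h8) (by omega)
  have hVB : V p B = ((0 : ℤ) : WithTop ℤ) := by
    have hlt : V p (-1 : ℚ) < V p (A1*z₁ + A2*z₁^2 + A3*(w₁+w₂) + A4*(z₁*(w₁+w₂))
        + A6*(w₁^2 + w₁*w₂ + w₂^2)) := by
      rw [V_neg, V_one]
      exact lt_of_lt_of_le (by exact_mod_cast (by norm_num : (0:ℤ) < 1)) hVBrest
    rw [hB]
    rw [V_add_eq_left hlt, V_neg, V_one]
    rfl
  have hBne : B ≠ 0 := V_ne_zero_of_coe hVB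
  have hzne : z₂ - z₁ ≠ 0 := by
    intro h0
    rw [h0, mul_zero, zero_add, mul_eq_zero] at hID
    rcases hID with h' | h'
    · exact hBne h'
    · have hwz : w₁ = w₂ := (sub_eq_zero.mp h').symm
      have hy12 : y₁ = y₂ := by
        rw [hw₁, hw₂, neg_inj, one_div, one_div] at hwz
        exact inv_injective hwz
      apply hx
      have hz0 : z₁ = z₂ := by rw [sub_eq_zero] at h0; exact h0.symm
      rw [hz₁, hz₂, hy12, neg_inj, div_eq_div_iff hy₂ hy₂] at hz0
      exact mul_right_cancel₀ hy₂ hz0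
  obtain ⟨l, hl⟩ : ∃ X : ℚ, X = -(A / B) := ⟨_, rfl⟩
  have hVBinv : V p B⁻¹ = ((0 : ℤ) : WithTop ℤ) := by
    rw [V_inv_eq hVB]; congr 1
  have hVl : ((2*t : ℤ) : WithTop ℤ) ≤ V p l := by
    rw [hl, V_neg, div_eq_mul_inv]
    exact V_mono (V_mul_ge' hVA hVBinv.ge) (by omega)
  have hID' : B * (w₂ - w₁) = -(A * (z₂ - z₁)) := by linear_combination hID
  have hslope : w₂ - w₁ = l * (z₂ - z₁) := by
    have h9 : w₂ - w₁ = B⁻¹ * (B * (w₂ - w₁)) := by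
      rw [← mul_assoc, inv_mul_cancel₀ hBne, one_mul]
    rw [h9, hID', hl, div_eq_mul_inv]
    ring
  obtain ⟨ν, hν⟩ : ∃ X : ℚ, X = y₁ - L*x₁ := ⟨_, rfl⟩
  obtain ⟨ν', hν'⟩ : ∃ X : ℚ, X = w₁ - l*z₁ := ⟨_, rfl⟩
  have hVν' : ((3*t : ℤ) : WithTop ℤ) ≤ V p ν' := by
    rw [hν', sub_eq_add_neg]
    apply V_add_ge (V_mono hVw₁.ge (by omega)) ?_
    rw [V_neg]
    exact V_mono (V_mul_ge' hVl hVz₁.ge) (by omega)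
  have hl1 : L*z₁ + ν*w₁ = -1 := by
    rw [hν, hz₁, hw₁]
    field_simp
    ring
  have hline : y₂ = L*x₂ + (y₁ - L*x₁) := by
    rw [hL]
    field_simp [sub_ne_zero.mpr hx]
    ring
  have hl2 : L*z₂ + ν*w₂ = -1 := by
    rw [hν, hz₂, hw₂]
    field_simp
    linear_combination hline
  have hkey0 : (L + ν*l)*(z₂ - z₁) = 0 := by
    linear_combination hl2 - hl1 - ν * hslope
  have hkey : L = -(ν * l) := by
    rcases mul_eq_zero.mp hkey0 with h' | h'
    · linarith [h']
    · exact absurd h' hzne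
  have hνν' : ν * ν' = -1 := by
    rw [hν']
    linear_combination hl1 - z₁ * hkey
  have hνne : ν ≠ 0 := by
    intro h0; rw [h0, zero_mul] at hνν'; norm_num at hνν'
  have hν'ne : ν' ≠ 0 := by
    intro h0; rw [h0, mul_zero] at hνν'; norm_num at hνν'
  obtain ⟨a, ha⟩ := V_coe (p := p) hνne
  obtain ⟨b, hb⟩ := V_coe (p := p) hν'ne
  have hab : a + b = 0 := by
    have h10 := V_mul_eq ha hb
    rw [hνν', V_neg, V_one] at h10
    exact_mod_cast h10.symm
  have hb3 : 3*t ≤ b := by rw [hb] at hVν'; exact_mod_cast hVν'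
  rw [← hν]
  refine ⟨l, hVl, hkey, ?_, hνne⟩
  rw [ha]
  exact_mod_cast (by omega : a ≤ -3*t)


lemma caseB {A1 A2 A3 A4 A6 x₁ y₁ L : ℚ} {t s₁ : ℤ}
    (hA1 : 0 ≤ V p A1) (hA2 : 0 ≤ V p A2) (hA3 : 0 ≤ V p A3) (hA4 : 0 ≤ V p A4)
    (hA6 : 0 ≤ V p A6) (ht : 1 ≤ t)
    (heq₁ : y₁^2 + A1*x₁*y₁ + A3*y₁ = x₁^3 + A2*x₁^2 + A4*x₁ + A6)
    (hs₁ : t ≤ s₁)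
    (hVx₁ : V p x₁ = ((-2*s₁ : ℤ) : WithTop ℤ)) (hVy₁ : V p y₁ = ((-3*s₁ : ℤ) : WithTop ℤ))
    (hMy : 2*y₁ + A1*x₁ + A3 ≠ 0)
    (hL : L = (3*x₁^2 + 2*A2*x₁ + A4 - A1*y₁)/(2*y₁ + A1*x₁ + A3)) :
    ∃ l : ℚ, ((2*t : ℤ) : WithTop ℤ) ≤ V p l ∧ L = -((y₁ - L*x₁) * l) ∧
      V p (y₁ - L*x₁) ≤ ((-3*t : ℤ) : WithTop ℤ) ∧ y₁ - L*x₁ ≠ 0 := by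
  have hy₁ : y₁ ≠ 0 := V_ne_zero_of_coe hVy₁
  obtain ⟨z₁, hz₁⟩ : ∃ X : ℚ, X = -(x₁/y₁) := ⟨_, rfl⟩
  obtain ⟨w₁, hw₁⟩ : ∃ X : ℚ, X = -(1/y₁) := ⟨_, rfl⟩
  have hinv₁ : V p (y₁⁻¹) = ((3*s₁ : ℤ) : WithTop ℤ) := by
    have h := V_inv_eq (p := p) hVy₁; rw [h]; congr 1; ring
  have hVw₁ : V p w₁ = ((3*s₁ : ℤ) : WithTop ℤ) := by rw [hw₁, V_neg, one_div]; exact hinv₁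
  have hVz₁ : V p z₁ = ((s₁ : ℤ) : WithTop ℤ) := by
    rw [hz₁, V_neg, div_eq_mul_inv, V_mul_eq hVx₁ hinv₁]; congr 1; ring
  have h2q : 0 ≤ V p (2 : ℚ) := by
    have h := V_intCast_nonneg (p := p) 2; norm_num at h; exact h
  have h3q : 0 ≤ V p (3 : ℚ) := by
    have h := V_intCast_nonneg (p := p) 3; norm_num at h; exact h
  obtain ⟨Ez, hEz⟩ : ∃ X : ℚ, X = 3*z₁^2 + A1*w₁ + 2*(A2*(z₁*w₁)) + A4*w₁^2 := ⟨_, rfl⟩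
  obtain ⟨Ew, hEw⟩ : ∃ X : ℚ, X =
    -1 + (A1*z₁ + A2*z₁^2 + 2*(A3*w₁) + 2*(A4*(z₁*w₁)) + 3*(A6*w₁^2)) := ⟨_, rfl⟩
  have hVEz : ((2*t : ℤ) : WithTop ℤ) ≤ V p Ez := by
    rw [hEz]
    apply V_add_ge (V_add_ge (V_add_ge ?_ ?_) ?_) ?_
    · rw [pow_two]; exact V_mono (V_mul_ge' (V_c0 h3q) (V_mul_ge' hVz₁.ge hVz₁.ge)) (by omega)
    · exact V_mono (V_mul_ge' (V_c0 hA1) hVw₁.ge) (by omega)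
    · exact V_mono (V_mul_ge' (V_c0 h2q) (V_mul_ge' (V_c0 hA2)
        (V_mul_ge' hVz₁.ge hVw₁.ge))) (by omega)
    · rw [pow_two]; exact V_mono (V_mul_ge' (V_c0 hA4) (V_mul_ge' hVw₁.ge hVw₁.ge)) (by omega)
  have hVEwrest : ((1 : ℤ) : WithTop ℤ) ≤
      V p (A1*z₁ + A2*z₁^2 + 2*(A3*w₁) + 2*(A4*(z₁*w₁)) + 3*(A6*w₁^2)) := by
    apply V_add_ge (V_add_ge (V_add_ge (V_add_ge ?_ ?_) ?_) ?_) ?_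
    · exact V_mono (V_mul_ge' (V_c0 hA1) hVz₁.ge) (by omega)
    · rw [pow_two]; exact V_mono (V_mul_ge' (V_c0 hA2) (V_mul_ge' hVz₁.ge hVz₁.ge)) (by omega)
    · exact V_mono (V_mul_ge' (V_c0 h2q) (V_mul_ge' (V_c0 hA3) hVw₁.ge)) (by omega)
    · exact V_mono (V_mul_ge' (V_c0 h2q) (V_mul_ge' (V_c0 hA4)
        (V_mul_ge' hVz₁.ge hVw₁.ge))) (by omega)
    · rw [pow_two]; exact V_mono (V_mul_ge' (V_c0 h3q) (V_mul_ge' (V_c0 hA6)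
        (V_mul_ge' hVw₁.ge hVw₁.ge))) (by omega)
  have hVEw : V p Ew = ((0 : ℤ) : WithTop ℤ) := by
    have hlt : V p (-1 : ℚ) < V p (A1*z₁ + A2*z₁^2 + 2*(A3*w₁) + 2*(A4*(z₁*w₁))
        + 3*(A6*w₁^2)) := by
      rw [V_neg, V_one]
      exact lt_of_lt_of_le (by exact_mod_cast (by norm_num : (0:ℤ) < 1)) hVEwrest
    rw [hEw, V_add_eq_left hlt, V_neg, V_one]
    rfl
  have hEwne : Ew ≠ 0 := V_ne_zero_of_coe hVEw
  have hMx : y₁^2 * Ez = 3*x₁^2 + 2*A2*x₁ + A4 - A1*y₁ := by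
    rw [hEz, hz₁, hw₁]
    field_simp
    ring
  have hNw : y₁^2 * Ew = (2*y₁ + A1*x₁ + A3)*y₁ - (3*x₁^2 + 2*A2*x₁ + A4 - A1*y₁)*x₁ := by
    rw [hEw, hz₁, hw₁]
    field_simp
    linear_combination (-3) * heq₁
  obtain ⟨l, hl⟩ : ∃ X : ℚ, X = -(Ez / Ew) := ⟨_, rfl⟩
  have hVEwinv : V p Ew⁻¹ = ((0 : ℤ) : WithTop ℤ) := by rw [V_inv_eq hVEw]; congr 1
  have hVl : ((2*t : ℤ) : WithTop ℤ) ≤ V p l := by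
    rw [hl, V_neg, div_eq_mul_inv]
    exact V_mono (V_mul_ge' hVEz hVEwinv.ge) (by omega)
  obtain ⟨ν, hν⟩ : ∃ X : ℚ, X = y₁ - L*x₁ := ⟨_, rfl⟩
  obtain ⟨ν', hν'⟩ : ∃ X : ℚ, X = w₁ - l*z₁ := ⟨_, rfl⟩
  have hkey0 : L*(y₁^2*Ew) = (y₁ - L*x₁)*(y₁^2*Ez) := by
    rw [hMx, hNw, hL]
    linear_combination ((3*x₁^2 + 2*A2*x₁ + A4 - A1*y₁)*y₁) * (inv_mul_cancel₀ hMy)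
  have hkey0' : L*Ew = (y₁ - L*x₁)*Ez := by
    apply mul_left_cancel₀ (pow_ne_zero 2 hy₁)
    linear_combination hkey0
  have hkey : L = -(ν * l) := by
    rw [hν, hl]
    field_simp
    linear_combination hkey0'
  have hVν' : ((3*t : ℤ) : WithTop ℤ) ≤ V p ν' := by
    rw [hν', sub_eq_add_neg]
    apply V_add_ge (V_mono hVw₁.ge (by omega)) ?_
    rw [V_neg]
    exact V_mono (V_mul_ge' hVl hVz₁.ge) (by omega)
  have hl1 : L*z₁ + ν*w₁ = -1 := by
    rw [hν, hz₁, hw₁]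
    field_simp
    ring
  have hνν' : ν * ν' = -1 := by
    rw [hν']
    linear_combination hl1 - z₁ * hkey
  have hνne : ν ≠ 0 := by
    intro h0; rw [h0, zero_mul] at hνν'; norm_num at hνν'
  have hν'ne : ν' ≠ 0 := by
    intro h0; rw [h0, mul_zero] at hνν'; norm_num at hνν'
  obtain ⟨a, ha⟩ := V_coe (p := p) hνne
  obtain ⟨b, hb⟩ := V_coe (p := p) hν'ne
  have hab : a + b = 0 := by
    have h10 := V_mul_eq ha hb
    rw [hνν', V_neg, V_one] at h10
    exact_mod_cast h10.symm
  have hb3 : 3*t ≤ b := by rw [hb] at hVν'; exact_mod_cast hVν'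
  rw [← hν]
  refine ⟨l, hVl, hkey, ?_, hνne⟩
  rw [ha]
  exact_mod_cast (by omega : a ≤ -3*t)


lemma deepX {A1 A2 A3 A4 A6 x₁ y₁ L X3 : ℚ} {t : ℤ} (ht : 1 ≤ t)
    (hA1 : 0 ≤ V p A1) (hA2 : 0 ≤ V p A2) (hA3 : 0 ≤ V p A3) (hA4 : 0 ≤ V p A4)
    (hA6 : 0 ≤ V p A6)
    (hcase : ∃ l : ℚ, ((2*t : ℤ) : WithTop ℤ) ≤ V p l ∧ L = -((y₁ - L*x₁) * l) ∧
      V p (y₁ - L*x₁) ≤ ((-3*t : ℤ) : WithTop ℤ) ∧ y₁ - L*x₁ ≠ 0)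
    (heq₃ : (L*(X3-x₁)+y₁)^2 + A1*X3*(L*(X3-x₁)+y₁) + A3*(L*(X3-x₁)+y₁)
        = X3^3 + A2*X3^2 + A4*X3 + A6) :
    V p X3 ≤ ((-2*t : ℤ) : WithTop ℤ) := by
  obtain ⟨l, hVl, hkey, hVν, hνne⟩ := hcase
  by_contra hc
  push_neg at hc
  have hstep : ((-2*t+1 : ℤ) : WithTop ℤ) ≤ V p X3 := V_succ_le_of_lt hc
  have hVlX : ((1:ℤ) : WithTop ℤ) ≤ V p (l*X3) := V_mono (V_mul_ge' hVl hstep) (by omega)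
  have h1m : V p (1 + -(l*X3)) = ((0:ℤ) : WithTop ℤ) := by
    have hlt : V p (1:ℚ) < V p (-(l*X3)) := by
      rw [V_one, V_neg]
      exact lt_of_lt_of_le (by exact_mod_cast (by norm_num : (0:ℤ) < 1)) hVlX
    rw [V_add_eq_left hlt, V_one]; rfl
  obtain ⟨a, ha⟩ := V_coe (p := p) hνne
  have ha3 : a ≤ -3*t := by rw [ha] at hVν; exact_mod_cast hVν
  have hy3 : L*(X3-x₁)+y₁ = (y₁ - L*x₁)*(1 + -(l*X3)) := by linear_combination X3 * hkey
  have hVY : V p (L*(X3-x₁)+y₁) = (a : WithTop ℤ) := by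
    rw [hy3, V_mul_eq ha h1m]; congr 1; ring
  rcases trichot hA1 hA2 hA3 hA4 hA6 heq₃ with ⟨hx0, hy0⟩ | ⟨s₃, hs₃, hX3v, hY3v⟩
  · rw [hVY] at hy0
    have : (0:ℤ) ≤ a := by exact_mod_cast hy0
    omega
  · rw [hVY] at hY3v
    have h11 : a = -3*s₃ := by exact_mod_cast hY3v
    rw [hX3v] at hc
    have h12 : -2*t < -2*s₃ := by exact_mod_cast hc
    omega

section Wrap

open WeierstrassCurve.Affine

variable {p : ℕ} [hp : Fact p.Prime] {a₁ a₂ a₃ a₄ a₆ : ℤ}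

lemma curveQ_a1 : (curveQ a₁ a₂ a₃ a₄ a₆).a₁ = (a₁ : ℚ) := rfl
lemma curveQ_a2 : (curveQ a₁ a₂ a₃ a₄ a₆).a₂ = (a₂ : ℚ) := rfl
lemma curveQ_a3 : (curveQ a₁ a₂ a₃ a₄ a₆).a₃ = (a₃ : ℚ) := rfl
lemma curveQ_a4 : (curveQ a₁ a₂ a₃ a₄ a₆).a₄ = (a₄ : ℚ) := rfl
lemma curveQ_a6 : (curveQ a₁ a₂ a₃ a₄ a₆).a₆ = (a₆ : ℚ) := rfl

lemma raw_equation {x y : ℚ} (h : (curveQ a₁ a₂ a₃ a₄ a₆).Equation x y) :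
    y^2 + (a₁:ℚ)*x*y + (a₃:ℚ)*y = x^3 + (a₂:ℚ)*x^2 + (a₄:ℚ)*x + (a₆:ℚ) := by
  have h2 := (WeierstrassCurve.Affine.equation_iff x y).mp h
  rw [curveQ_a1, curveQ_a2, curveQ_a3, curveQ_a4, curveQ_a6] at h2
  exact h2

/-- trichotomy for points on `curveQ` -/
lemma trichotC {x y : ℚ} (h : (curveQ a₁ a₂ a₃ a₄ a₆).Equation x y) :
    (0 ≤ V p x ∧ 0 ≤ V p y) ∨
      ∃ s : ℤ, 1 ≤ s ∧ V p x = ((-2*s : ℤ) : WithTop ℤ) ∧ V p y = ((-3*s : ℤ) : WithTop ℤ) :=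
  trichot (V_intCast_nonneg a₁) (V_intCast_nonneg a₂) (V_intCast_nonneg a₃)
    (V_intCast_nonneg a₄) (V_intCast_nonneg a₆) (raw_equation h)

/-- get the exact valuations of a deep point -/
lemma deep_val {x y : ℚ} {t : ℤ} (ht : 1 ≤ t) (h : (curveQ a₁ a₂ a₃ a₄ a₆).Equation x y)
    (hd : V p x ≤ ((-2*t : ℤ) : WithTop ℤ)) :
    ∃ s : ℤ, t ≤ s ∧ V p x = ((-2*s : ℤ) : WithTop ℤ) ∧ V p y = ((-3*s : ℤ) : WithTop ℤ) := by
  rcases trichotC (p := p) h with ⟨hx0, _⟩ | ⟨s, hs, hx, hy⟩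
  · exfalso
    have h2 := le_trans hx0 hd
    have : (0:ℤ) ≤ -2*t := by exact_mod_cast h2
    omega
  · refine ⟨s, ?_, hx, hy⟩
    rw [hx] at hd
    have : (-2*s : ℤ) ≤ -2*t := by exact_mod_cast hd
    omega

lemma deep_addX {t : ℤ} (ht : 1 ≤ t) {x₁ y₁ x₂ y₂ : ℚ}
    (h₁ : (curveQ a₁ a₂ a₃ a₄ a₆).Equation x₁ y₁)
    (h₂ : (curveQ a₁ a₂ a₃ a₄ a₆).Equation x₂ y₂)
    (hxy : x₁ = x₂ → y₁ ≠ (curveQ a₁ a₂ a₃ a₄ a₆).negY x₂ y₂)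
    (hd₁ : V p x₁ ≤ ((-2*t : ℤ) : WithTop ℤ)) (hd₂ : V p x₂ ≤ ((-2*t : ℤ) : WithTop ℤ)) :
    V p ((curveQ a₁ a₂ a₃ a₄ a₆).addX x₁ x₂
      ((curveQ a₁ a₂ a₃ a₄ a₆).slope x₁ x₂ y₁ y₂)) ≤ ((-2*t : ℤ) : WithTop ℤ) := by
  set C := curveQ a₁ a₂ a₃ a₄ a₆ with hC
  set L := C.slope x₁ x₂ y₁ y₂ with hLdef
  set X3 := C.addX x₁ x₂ L with hX3
  obtain ⟨s₁, hs₁, hVx₁, hVy₁⟩ := deep_val (p := p) ht h₁ hd₁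
  obtain ⟨s₂, hs₂, hVx₂, hVy₂⟩ := deep_val (p := p) ht h₂ hd₂
  have heq₃C : C.Equation X3 (C.negAddY x₁ x₂ y₁ L) :=
    WeierstrassCurve.Affine.equation_negAdd h₁ h₂ (fun h => hxy h.1 h.2)
  have hnegAdd : C.negAddY x₁ x₂ y₁ L = L*(X3 - x₁) + y₁ := rfl
  rw [hnegAdd] at heq₃C
  have heq₃ := raw_equation (a₁ := a₁) (a₂ := a₂) (a₃ := a₃) (a₄ := a₄) (a₆ := a₆) heq₃C
  have hcase : ∃ l : ℚ, ((2*t : ℤ) : WithTop ℤ) ≤ V p l ∧ L = -((y₁ - L*x₁) * l) ∧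
      V p (y₁ - L*x₁) ≤ ((-3*t : ℤ) : WithTop ℤ) ∧ y₁ - L*x₁ ≠ 0 := by
    by_cases hx : x₁ = x₂
    · have hy : y₁ ≠ C.negY x₂ y₂ := hxy hx
      have hy12 : y₁ = y₂ := WeierstrassCurve.Affine.Y_eq_of_Y_ne h₁ h₂ hx hy
      have hyy : y₁ ≠ C.negY x₁ y₁ := by
        rw [← hy12, ← hx] at hy
        exact hy
      have hden : y₁ - C.negY x₁ y₁ = 2*y₁ + (a₁:ℚ)*x₁ + (a₃:ℚ) := by
        show y₁ - (-y₁ - C.a₁ * x₁ - C.a₃) = _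
        rw [curveQ_a1, curveQ_a3]; ring
      have hMy : 2*y₁ + (a₁:ℚ)*x₁ + (a₃:ℚ) ≠ 0 := by
        rw [← hden]; exact sub_ne_zero.mpr hyy
      have hL : L = (3*x₁^2 + 2*(a₂:ℚ)*x₁ + (a₄:ℚ) - (a₁:ℚ)*y₁)/(2*y₁ + (a₁:ℚ)*x₁ + (a₃:ℚ)) := by
        rw [hLdef, WeierstrassCurve.Affine.slope_of_Y_ne hx hy, hden,
          curveQ_a1, curveQ_a2, curveQ_a4]
      exact caseB (V_intCast_nonneg a₁) (V_intCast_nonneg a₂) (V_intCast_nonneg a₃)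
        (V_intCast_nonneg a₄) (V_intCast_nonneg a₆) ht (raw_equation h₁) hs₁ hVx₁ hVy₁ hMy hL
    · have hL : L = (y₁ - y₂)/(x₁ - x₂) := by
        rw [hLdef, WeierstrassCurve.Affine.slope_of_X_ne hx]
      exact caseA (V_intCast_nonneg a₁) (V_intCast_nonneg a₂) (V_intCast_nonneg a₃)
        (V_intCast_nonneg a₄) (V_intCast_nonneg a₆) ht (raw_equation h₁) (raw_equation h₂)
        hs₁ hs₂ hVx₁ hVy₁ hVx₂ hVy₂ hx hL
  exact deepX ht (V_intCast_nonneg a₁) (V_intCast_nonneg a₂) (V_intCast_nonneg a₃)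
    (V_intCast_nonneg a₄) (V_intCast_nonneg a₆) hcase heq₃

end Wrap


open WeierstrassCurve.Affine in
lemma xCoord_some' {a₁ a₂ a₃ a₄ a₆ : ℤ} {x y : ℚ}
    (h : (curveQ a₁ a₂ a₃ a₄ a₆).Nonsingular x y) :
    xCoord (WeierstrassCurve.Affine.Point.some _ _ h) = x := rfl

open WeierstrassCurve.Affine in
lemma exists_some {a₁ a₂ a₃ a₄ a₆ : ℤ} {Q : (curveQ a₁ a₂ a₃ a₄ a₆).Point} (h : Q ≠ 0) :
    ∃ (x y : ℚ) (hn : (curveQ a₁ a₂ a₃ a₄ a₆).Nonsingular x y),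
      Q = WeierstrassCurve.Affine.Point.some _ _ hn := by
  cases Q with
  | zero => exact absurd rfl h
  | some _ _ hn => exact ⟨_, _, hn, rfl⟩

open WeierstrassCurve.Affine WeierstrassCurve.Affine.Point in
noncomputable def Kt (p : ℕ) [hp : Fact p.Prime] (a₁ a₂ a₃ a₄ a₆ : ℤ) (t : ℤ) (ht : 1 ≤ t) :
    AddSubgroup (curveQ a₁ a₂ a₃ a₄ a₆).Point where
  carrier := {Q | Q = 0 ∨ V p (xCoord Q) ≤ ((-2*t : ℤ) : WithTop ℤ)}
  zero_mem' := Or.inl rfl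
  neg_mem' := by
    rintro Q (rfl | hd)
    · left; simp
    · rcases Q with _ | @⟨x, y, h⟩
      · left; rfl
      · right
        rw [show -Point.some _ _ h = Point.some _ _ ((nonsingular_neg ..).mpr h) from rfl]
        exact hd
  add_mem' := by
    intro Q₁ Q₂ h1 h2
    rcases h1 with rfl | hd1
    · rwa [zero_add]
    rcases h2 with rfl | hd2
    · rw [add_zero]; exact Or.inr hd1
    by_cases hs : Q₁ + Q₂ = 0
    · left; exact hs
    right
    rcases Q₁ with _ | @⟨x₁, y₁, h₁⟩
    · exfalso
      rw [show xCoord (Point.zero : (curveQ a₁ a₂ a₃ a₄ a₆).Point) = 0 from rfl, V_zero,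
        top_le_iff] at hd1
      exact WithTop.coe_ne_top hd1
    rcases Q₂ with _ | @⟨x₂, y₂, h₂⟩
    · exfalso
      rw [show xCoord (Point.zero : (curveQ a₁ a₂ a₃ a₄ a₆).Point) = 0 from rfl, V_zero,
        top_le_iff] at hd2
      exact WithTop.coe_ne_top hd2
    by_cases hxy : x₁ = x₂ ∧ y₁ = (curveQ a₁ a₂ a₃ a₄ a₆).negY x₂ y₂
    · exact absurd (add_of_Y_eq hxy.1 hxy.2) hs
    · have himp : x₁ = x₂ → y₁ ≠ (curveQ a₁ a₂ a₃ a₄ a₆).negY x₂ y₂ :=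
        fun hx hy => hxy ⟨hx, hy⟩
      rw [Point.add_some (fun h => himp h.1 h.2)]
      exact deep_addX ht h₁.1 h₂.1 himp hd1 hd2

section DenFact

variable {p : ℕ} [hp : Fact p.Prime]

lemma num_not_dvd {q : ℚ} (hdvd : p ∣ q.den) : ¬ (p:ℤ) ∣ q.num := by
  intro hdn
  have hpd : p ∣ q.num.natAbs := by
    have h2 : (p:ℤ).natAbs ∣ q.num.natAbs := Int.natAbs_dvd_natAbs.mpr hdn
    simpa using h2
  have h1 : p ∣ Nat.gcd q.num.natAbs q.den := Nat.dvd_gcd hpd hdvd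
  rw [q.reduced] at h1
  have := Nat.le_of_dvd one_pos h1
  have := hp.out.two_le
  omega

lemma fact_zero {q : ℚ} (h : 0 ≤ V p q) : q.den.factorization p = 0 := by
  rcases eq_or_ne q 0 with rfl | hq
  · simp
  · rw [Nat.factorization_def _ hp.out]
    by_contra hne
    have hdvd : p ∣ q.den := dvd_of_one_le_padicValNat (by omega)
    have hval : padicValRat p q < 0 := by
      rw [padicValRat_def, padicValInt.eq_zero_of_not_dvd (num_not_dvd hdvd)]
      omega
    rw [V_of_ne hq] at h
    have : (0:ℤ) ≤ padicValRat p q := by exact_mod_cast h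
    omega

lemma fact_val {q : ℚ} {v : ℤ} (hv : v < 0) (h : V p q = (v : WithTop ℤ)) :
    (q.den.factorization p : ℤ) = -v := by
  have hq : q ≠ 0 := V_ne_zero_of_coe h
  have hval : padicValRat p q = v := by rw [V_of_ne hq] at h; exact_mod_cast h
  rw [Nat.factorization_def _ hp.out]
  by_cases hdvd : p ∣ q.den
  · rw [padicValRat_def, padicValInt.eq_zero_of_not_dvd (num_not_dvd hdvd)] at hval
    omega
  · exfalso
    rw [padicValRat_def, padicValNat.eq_zero_of_not_dvd hdvd] at hval
    omega

end DenFact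


/-- Let `P` be a non-torsion rational point on an elliptic curve over `ℚ` with integer
coefficients.  For all integers `m, n ≥ 1` and every prime `p`,
`v_p(den(x(gcd(m,n)•P))) = min(v_p(den(x(m•P))), v_p(den(x(n•P))))`. -/
theorem valuation_den_gcd_smul (a₁ a₂ a₃ a₄ a₆ : ℤ)
    (P : (curveQ a₁ a₂ a₃ a₄ a₆).Point)
    (hP : ∀ n : ℕ, 1 ≤ n → n • P ≠ 0)
    (m n : ℕ) (hm : 1 ≤ m) (hn : 1 ≤ n) (p : ℕ) (hp : p.Prime) :
    (xCoord (Nat.gcd m n • P)).den.factorization p =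
      min ((xCoord (m • P)).den.factorization p)
        ((xCoord (n • P)).den.factorization p) := by
  haveI : Fact p.Prime := ⟨hp⟩
  have hg : 1 ≤ Nat.gcd m n := Nat.one_le_iff_ne_zero.mpr fun h0 =>
    (by omega : ¬ m = 0) (Nat.gcd_eq_zero_iff.mp h0).1
  obtain ⟨xg, yg, hnsg, hQg⟩ := exists_some (hP _ hg)
  obtain ⟨xm, ym, hnsm, hQm⟩ := exists_some (hP m hm)
  obtain ⟨xn, yn, hnsn, hQn⟩ := exists_some (hP n hn)
  rw [hQg, hQm, hQn, xCoord_some', xCoord_some', xCoord_some']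
  -- membership transfer
  have hStmem : ∀ (t : ℤ) (ht : 1 ≤ t) (k : ℕ) (x y : ℚ)
      (hns : (curveQ a₁ a₂ a₃ a₄ a₆).Nonsingular x y)
      (hk : k • P = WeierstrassCurve.Affine.Point.some _ _ hns),
      (V p x ≤ ((-2*t : ℤ) : WithTop ℤ) ↔
        ((k : ℤ)) ∈ (Kt p a₁ a₂ a₃ a₄ a₆ t ht).comap (zmultiplesHom _ P)) := by
    intro t ht k x y hns hk
    rw [AddSubgroup.mem_comap, zmultiplesHom_apply, natCast_zsmul, hk]
    constructor
    · intro h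
      exact Or.inr (by rwa [xCoord_some'])
    · rintro (h0 | h)
      · exact absurd h0 (WeierstrassCurve.Affine.Point.some_ne_zero hns)
      · rwa [xCoord_some'] at h
  have claim2 : ∀ t : ℤ, 1 ≤ t → V p xm ≤ ((-2*t : ℤ) : WithTop ℤ) →
      V p xn ≤ ((-2*t : ℤ) : WithTop ℤ) → V p xg ≤ ((-2*t : ℤ) : WithTop ℤ) := by
    intro t ht h1 h2
    have hm' := (hStmem t ht m xm ym hnsm hQm).mp h1
    have hn' := (hStmem t ht n xn yn hnsn hQn).mp h2
    refine (hStmem t ht (Nat.gcd m n) xg yg hnsg hQg).mpr ?_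
    have hbez := Nat.gcd_eq_gcd_ab m n
    rw [hbez]
    refine AddSubgroup.add_mem _ ?_ ?_
    · have h6 := AddSubgroup.zsmul_mem _ hm' (m.gcdA n)
      simpa [zsmul_eq_mul, mul_comm] using h6
    · have h6 := AddSubgroup.zsmul_mem _ hn' (m.gcdB n)
      simpa [zsmul_eq_mul, mul_comm] using h6
  have claim1 : ∀ (k : ℕ) (x y : ℚ) (hns : (curveQ a₁ a₂ a₃ a₄ a₆).Nonsingular x y)
      (hk : k • P = WeierstrassCurve.Affine.Point.some _ _ hns) (hdvd : Nat.gcd m n ∣ k)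
      (t : ℤ), 1 ≤ t → V p xg ≤ ((-2*t : ℤ) : WithTop ℤ) →
      V p x ≤ ((-2*t : ℤ) : WithTop ℤ) := by
    intro k x y hns hk hdvd t ht h
    have hg' := (hStmem t ht (Nat.gcd m n) xg yg hnsg hQg).mp h
    refine (hStmem t ht k x y hns hk).mpr ?_
    obtain ⟨c, hc⟩ := hdvd
    have h5 : ((k : ℕ) : ℤ) = (c : ℤ) • ((Nat.gcd m n : ℕ) : ℤ) := by
      simp only [zsmul_eq_mul, Int.cast_id]
      rw [hc]; push_cast; ring
    rw [h5]
    exact AddSubgroup.zsmul_mem _ hg' _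
  -- characterizations
  have charg := trichotC (p := p) hnsg.1
  have charm := trichotC (p := p) hnsm.1
  have charn := trichotC (p := p) hnsn.1
  -- reduce goal to ℤ
  have main : ((xg.den.factorization p : ℤ)) =
      min ((xm.den.factorization p : ℤ)) ((xn.den.factorization p : ℤ)) := by
    rcases charm with ⟨hm0, _⟩ | ⟨sm, hsm, hVm, _⟩
    · -- m-point not deep : RHS min is 0 ; need xg not deep either
      rw [fact_zero hm0]
      rcases charg with ⟨hg0, _⟩ | ⟨sg, hsg, hVg, _⟩
      · rw [fact_zero hg0]
        omega
      · exfalso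
        have := claim1 m xm ym hnsm hQm (Nat.gcd_dvd_left m n) sg hsg (le_of_eq hVg)
        have h2 := le_trans hm0 this
        have : (0:ℤ) ≤ -2*sg := by exact_mod_cast h2
        omega
    rcases charn with ⟨hn0, _⟩ | ⟨sn, hsn, hVn, _⟩
    · rw [fact_zero hn0]
      rcases charg with ⟨hg0, _⟩ | ⟨sg, hsg, hVg, _⟩
      · rw [fact_zero hg0]
        omega
      · exfalso
        have := claim1 n xn yn hnsn hQn (Nat.gcd_dvd_right m n) sg hsg (le_of_eq hVg)
        have h2 := le_trans hn0 this
        have : (0:ℤ) ≤ -2*sg := by exact_mod_cast h2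
        omega
    · -- both deep
      have hmf : (xm.den.factorization p : ℤ) = 2*sm := by
        rw [fact_val (by omega) hVm]; ring
      have hnf : (xn.den.factorization p : ℤ) = 2*sn := by
        rw [fact_val (by omega) hVn]; ring
      set t : ℤ := min sm sn with htdef
      have ht : 1 ≤ t := le_min hsm hsn
      have hdg : V p xg ≤ ((-2*t : ℤ) : WithTop ℤ) := by
        apply claim2 t ht
        · rw [hVm]; exact_mod_cast (by omega : (-2*sm : ℤ) ≤ -2*t)
        · rw [hVn]; exact_mod_cast (by omega : (-2*sn : ℤ) ≤ -2*t)
      rcases charg with ⟨hg0, _⟩ | ⟨sg, hsg, hVg, _⟩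
      · exfalso
        have h2 := le_trans hg0 hdg
        have : (0:ℤ) ≤ -2*t := by exact_mod_cast h2
        omega
      · have hgf : (xg.den.factorization p : ℤ) = 2*sg := by
          rw [fact_val (by omega) hVg]; ring
        have h1 : t ≤ sg := by
          rw [hVg] at hdg
          have : (-2*sg : ℤ) ≤ -2*t := by exact_mod_cast hdg
          omega
        have h2 : sg ≤ sm := by
          have := claim1 m xm ym hnsm hQm (Nat.gcd_dvd_left m n) sg hsg (le_of_eq hVg)
          rw [hVm] at this
          have : (-2*sm : ℤ) ≤ -2*sg := by exact_mod_cast this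
          omega
        have h3 : sg ≤ sn := by
          have := claim1 n xn yn hnsn hQn (Nat.gcd_dvd_right m n) sg hsg (le_of_eq hVg)
          rw [hVn] at this
          have : (-2*sn : ℤ) ≤ -2*sg := by exact_mod_cast this
          omega
        rw [hgf, hmf, hnf]
        omega
  exact_mod_cast main
end

section
/- Let E be a minimal short Weierstrass elliptic curve over K = ℚ(t), let P′ ∈ E(K) be a non-torsion point, let k ≥ 2 be an integer, and set P := k•P′. Then B_{P′} divides B_P, and the quotient B_P / B_{P′} is coprime to B_{P′} in ℚ[t]. -/
open Polynomial

/-- The short Weierstrass curve `y² = x³ + A·x + B` over `K = ℚ(t)`. -/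
noncomputable def curveQt (A B : Polynomial ℚ) : WeierstrassCurve.Affine (RatFunc ℚ) :=
  { a₁ := 0, a₂ := 0, a₃ := 0,
    a₄ := algebraMap (Polynomial ℚ) (RatFunc ℚ) A,
    a₆ := algebraMap (Polynomial ℚ) (RatFunc ℚ) B }

namespace CanonAux

noncomputable def ι : Polynomial ℚ →+* RatFunc ℚ := algebraMap (Polynomial ℚ) (RatFunc ℚ)

lemma ι_inj : Function.Injective ι := RatFunc.algebraMap_injective ℚ

lemma ι_ne_zero {p : Polynomial ℚ} (hp : p ≠ 0) : ι p ≠ 0 := by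
  simpa [ι, map_eq_zero_iff _ ι_inj] using hp

instance : CharZero (RatFunc ℚ) := charZero_of_injective_algebraMap (RatFunc.algebraMap_injective ℚ)

section Res

variable {F : Type} [Field F] (φ : Polynomial ℚ →+* F)

/-- `ξ` has residue `r` modulo the prime corresponding to `φ`. -/
def Res (ξ : RatFunc ℚ) (r : F) : Prop :=
  ∃ p q : Polynomial ℚ, φ q ≠ 0 ∧ ξ * ι q = ι p ∧ r * φ q = φ p

variable {φ}

lemma Res.unique {ξ : RatFunc ℚ} {r s : F} (h1 : Res φ ξ r) (h2 : Res φ ξ s) : r = s := by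
  obtain ⟨p₁, q₁, hq₁, he₁, hr₁⟩ := h1
  obtain ⟨p₂, q₂, hq₂, he₂, hr₂⟩ := h2
  have key : p₁ * q₂ = p₂ * q₁ := by
    apply ι_inj
    have h2 : (ξ * ι q₁) * ι q₂ = (ξ * ι q₂) * ι q₁ := by ring
    rw [he₁, he₂, ← map_mul, ← map_mul] at h2
    exact h2
  have : φ p₁ * φ q₂ = φ p₂ * φ q₁ := by rw [← map_mul, ← map_mul, key]
  rw [← hr₁, ← hr₂] at this
  have h3 : (r - s) * (φ q₁ * φ q₂) = 0 := by linear_combination this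
  rcases mul_eq_zero.mp h3 with h | h
  · exact sub_eq_zero.mp h
  · exact absurd h (mul_ne_zero hq₁ hq₂)

lemma res_algebraMap (p : Polynomial ℚ) : Res φ (ι p) (φ p) :=
  ⟨p, 1, by simp, by simp, by simp⟩

lemma res_natCast (n : ℕ) : Res φ (n : RatFunc ℚ) (n : F) := by
  have := res_algebraMap (φ := φ) (n : Polynomial ℚ)
  simpa [ι, map_natCast] using this

lemma Res.add {ξ η : RatFunc ℚ} {r s : F} (h1 : Res φ ξ r) (h2 : Res φ η s) :
    Res φ (ξ + η) (r + s) := by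
  obtain ⟨p₁, q₁, hq₁, he₁, hr₁⟩ := h1
  obtain ⟨p₂, q₂, hq₂, he₂, hr₂⟩ := h2
  refine ⟨p₁ * q₂ + p₂ * q₁, q₁ * q₂, by simp [hq₁, hq₂], ?_, ?_⟩
  · have : (ξ + η) * ι (q₁ * q₂) = (ξ * ι q₁) * ι q₂ + (η * ι q₂) * ι q₁ := by
      simp only [map_mul]; ring
    rw [this, he₁, he₂]; simp only [map_add, map_mul]
  · simp only [map_add, map_mul]
    calc (r + s) * (φ q₁ * φ q₂) = (r * φ q₁) * φ q₂ + (s * φ q₂) * φ q₁ := by ring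
    _ = φ p₁ * φ q₂ + φ p₂ * φ q₁ := by rw [hr₁, hr₂]

lemma Res.mul {ξ η : RatFunc ℚ} {r s : F} (h1 : Res φ ξ r) (h2 : Res φ η s) :
    Res φ (ξ * η) (r * s) := by
  obtain ⟨p₁, q₁, hq₁, he₁, hr₁⟩ := h1
  obtain ⟨p₂, q₂, hq₂, he₂, hr₂⟩ := h2
  refine ⟨p₁ * p₂, q₁ * q₂, by simp [hq₁, hq₂], ?_, ?_⟩
  · have : (ξ * η) * ι (q₁ * q₂) = (ξ * ι q₁) * (η * ι q₂) := by
      simp only [map_mul]; ring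
    rw [this, he₁, he₂, map_mul]
  · simp only [map_mul]
    calc (r * s) * (φ q₁ * φ q₂) = (r * φ q₁) * (s * φ q₂) := by ring
    _ = φ p₁ * φ p₂ := by rw [hr₁, hr₂]

lemma Res.neg {ξ : RatFunc ℚ} {r : F} (h1 : Res φ ξ r) : Res φ (-ξ) (-r) := by
  obtain ⟨p₁, q₁, hq₁, he₁, hr₁⟩ := h1
  exact ⟨-p₁, q₁, hq₁, by rw [neg_mul, he₁, map_neg], by rw [neg_mul, hr₁, map_neg]⟩

lemma Res.sub {ξ η : RatFunc ℚ} {r s : F} (h1 : Res φ ξ r) (h2 : Res φ η s) :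
    Res φ (ξ - η) (r - s) := by
  simpa [sub_eq_add_neg] using h1.add h2.neg

lemma Res.div {ξ η : RatFunc ℚ} {r s : F} (h1 : Res φ ξ r) (h2 : Res φ η s) (hs : s ≠ 0) :
    Res φ (ξ / η) (r / s) := by
  obtain ⟨p₁, q₁, hq₁, he₁, hr₁⟩ := h1
  obtain ⟨p₂, q₂, hq₂, he₂, hr₂⟩ := h2
  have hp₂ : φ p₂ ≠ 0 := by rw [← hr₂]; exact mul_ne_zero hs hq₂
  have hp₂0 : p₂ ≠ 0 := fun h => hp₂ (by simp [h])
  have hη : η ≠ 0 := by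
    rintro rfl
    rw [zero_mul] at he₂
    exact hp₂0 (ι_inj (by simpa using he₂.symm))
  refine ⟨p₁ * q₂, q₁ * p₂, by simp [hq₁, hp₂], ?_, ?_⟩
  · have hιq₂ : ι q₂ ≠ 0 := ι_ne_zero (fun h => hq₂ (by simp [h]))
    field_simp [map_mul]
    calc ξ * ι (q₁ * p₂) = (ξ * ι q₁) * ι p₂ := by rw [map_mul]; ring
    _ = ι p₁ * ι p₂ := by rw [he₁]
    _ = ι p₁ * (η * ι q₂) := by rw [he₂]
    _ = η * (ι p₁ * ι q₂) := by ring
    _ = η * ι (p₁ * q₂) := by rw [map_mul]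
  · simp only [map_mul]
    field_simp
    calc r * φ q₁ * φ p₂ = (r * φ q₁) * φ p₂ := by ring
    _ = φ p₁ * (s * φ q₂) := by rw [hr₁, hr₂]
    _ = s * (φ p₁ * φ q₂) := by ring
    _ = s * φ p₁ * φ q₂ := by ring

lemma Res.congr {ξ : RatFunc ℚ} {r s : F} (h1 : Res φ ξ r) (hrs : r = s) : Res φ ξ s := hrs ▸ h1

lemma Res.congr_left {ξ η : RatFunc ℚ} {r : F} (h1 : Res φ ξ r) (hξη : ξ = η) : Res φ η r :=
  hξη ▸ h1

end Res

section PrimeLemmas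

variable {F : Type} [Field F] {φ : Polynomial ℚ →+* F} {π : Polynomial ℚ}

lemma phi_pi (hker : ∀ q, φ q = 0 ↔ π ∣ q) : φ π = 0 := (hker π).mpr dvd_rfl

lemma natF_ne (hker : ∀ q, φ q = 0 ↔ π ∣ q) (hπ : Irreducible π) {n : ℕ} (hn : n ≠ 0) :
    (n : F) ≠ 0 := by
  intro h
  have h1 : φ (n : Polynomial ℚ) = 0 := by rw [map_natCast]; exact h
  have h2 : π ∣ (n : Polynomial ℚ) := (hker _).mp h1
  have h3 : IsUnit ((n : ℕ) : Polynomial ℚ) := by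
    rw [← Polynomial.C_eq_natCast]
    exact Polynomial.isUnit_C.mpr (isUnit_iff_ne_zero.mpr (by exact_mod_cast hn))
  exact hπ.not_isUnit (isUnit_of_dvd_unit h2 h3)

lemma ratF_ne (hker : ∀ q, φ q = 0 ↔ π ∣ q) (hπ : Irreducible π) {r : ℚ} (hr : r ≠ 0) :
    φ (C r) ≠ 0 := by
  intro h
  have h2 : π ∣ C r := (hker _).mp h
  exact hπ.not_isUnit (isUnit_of_dvd_unit h2 (Polynomial.isUnit_C.mpr (isUnit_iff_ne_zero.mpr hr)))

lemma xi_mul_denom (ξ : RatFunc ℚ) : ξ * ι ξ.denom = ι ξ.num :=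
  ((div_eq_iff (ι_ne_zero (RatFunc.denom_ne_zero ξ))).mp ξ.num_div_denom).symm

lemma res_total (hker : ∀ q, φ q = 0 ↔ π ∣ q) {ξ : RatFunc ℚ} (h : φ ξ.denom ≠ 0) :
    Res φ ξ (φ ξ.num / φ ξ.denom) :=
  ⟨ξ.num, ξ.denom, h, xi_mul_denom ξ, by field_simp⟩

lemma denom_phi_ne_of_sq (hker : ∀ q, φ q = 0 ↔ π ∣ q) (hπ : Irreducible π) {ξ : RatFunc ℚ}
    {r : F} (h : Res φ (ξ * ξ) r) : φ ξ.denom ≠ 0 := by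
  obtain ⟨p, q, hq, he, -⟩ := h
  intro hd
  have hπd : π ∣ ξ.denom := (hker _).mp hd
  have hnum : ξ * ι ξ.denom = ι ξ.num := xi_mul_denom ξ
  have key : ξ.num * ξ.num * q = p * (ξ.denom * ξ.denom) := by
    apply ι_inj
    have : (ξ * ι ξ.denom) * (ξ * ι ξ.denom) * ι q = ((ξ * ξ) * ι q) * (ι ξ.denom * ι ξ.denom) := by
      ring
    rw [hnum, he] at this
    simp only [map_mul] at this ⊢
    exact this
  have hprime : Prime π := hπ.prime
  have hdvd : π ∣ ξ.num * ξ.num * q := by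
    rw [key]; exact Dvd.dvd.mul_left (hπd.mul_right _) p
  rcases hprime.dvd_mul.mp hdvd with h1 | h1
  · rcases hprime.dvd_mul.mp h1 with h2 | h2 <;>
      exact hπ.not_isUnit ((RatFunc.isCoprime_num_denom ξ).isUnit_of_dvd' h2 hπd)
  · exact hq ((hker q).mpr h1)

end PrimeLemmas

section Curve

open WeierstrassCurve.Affine

variable (A B : Polynomial ℚ)

lemma curve_a₁ : (curveQt A B).a₁ = 0 := rfl
lemma curve_a₂ : (curveQt A B).a₂ = 0 := rfl
lemma curve_a₃ : (curveQt A B).a₃ = 0 := rfl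
lemma curve_a₄ : (curveQt A B).a₄ = ι A := rfl
lemma curve_a₆ : (curveQt A B).a₆ = ι B := rfl

lemma curve_negY (x y : RatFunc ℚ) : (curveQt A B).negY x y = -y := by
  simp [WeierstrassCurve.Affine.negY, curve_a₁, curve_a₃]

lemma curve_equation {x y : RatFunc ℚ} (h : (curveQt A B).Equation x y) :
    y ^ 2 = x ^ 3 + ι A * x + ι B := by
  rw [WeierstrassCurve.Affine.equation_iff] at h
  rw [curve_a₁, curve_a₂, curve_a₃, curve_a₄, curve_a₆] at h
  linear_combination h

lemma curve_addX (x₁ x₂ L : RatFunc ℚ) :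
    (curveQt A B).addX x₁ x₂ L = L ^ 2 - x₁ - x₂ := by
  simp [WeierstrassCurve.Affine.addX, curve_a₁, curve_a₂]

lemma curve_addY (x₁ x₂ y₁ L : RatFunc ℚ) :
    (curveQt A B).addY x₁ x₂ y₁ L = -(L * ((curveQt A B).addX x₁ x₂ L - x₁) + y₁) := by
  rw [WeierstrassCurve.Affine.addY, curve_negY, WeierstrassCurve.Affine.negAddY]

end Curve

section Key

open WeierstrassCurve.Affine WeierstrassCurve.Affine.Point
open Classical

variable {F : Type} [Field F] [CharZero F] {φ : Polynomial ℚ →+* F} {π : Polynomial ℚ}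

lemma key (hker : ∀ q, φ q = 0 ↔ π ∣ q) (hπ : Irreducible π)
    (A B : Polynomial ℚ) {x₀ y₀ : RatFunc ℚ} (h₀ : (curveQt A B).Nonsingular x₀ y₀)
    (hntor : ∀ n : ℕ, 1 ≤ n → n • (Point.some _ _ h₀) ≠ 0)
    (a : ℕ) (ha : 1 ≤ a) (c d : F) (hc0 : c ≠ 0) (hd0 : d ≠ 0) (hcd : d ^ 2 = c ^ 3)
    (hc : Res φ (ι π ^ (2 * a) * x₀) c) (hd : Res φ (ι π ^ (3 * a) * y₀) d) :
    ∀ n : ℕ, 1 ≤ n → ∃ (x y : RatFunc ℚ) (h : (curveQt A B).Nonsingular x y),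
      n • (Point.some _ _ h₀) = Point.some _ _ h ∧
      Res φ (ι π ^ (2 * a) * x) (c / (n : F) ^ 2) ∧
      Res φ (ι π ^ (3 * a) * y) (d / (n : F) ^ 3) := by
  have hπ0 : ι π ≠ 0 := ι_ne_zero hπ.ne_zero
  intro n hn
  induction n, hn using Nat.le_induction with
  | base =>
    exact ⟨x₀, y₀, h₀, one_nsmul _, hc.congr (by norm_num), hd.congr (by norm_num)⟩
  | succ n hn ih =>
    obtain ⟨xn, yn, hR, hsmul, hcn, hdn⟩ := ih
    have hNn : (n : F) ≠ 0 := natF_ne hker hπ (by omega)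
    have hNn1 : ((n : F) + 1) ≠ 0 := by
      have : ((n + 1 : ℕ) : F) ≠ 0 := natF_ne hker hπ (by omega)
      push_cast at this; exact this
    -- the crucial non-degeneracy: add formula applies
    have hxy : xn = x₀ → yn ≠ (curveQt A B).negY x₀ y₀ := by
      intro hx hy
      have : (n + 1) • (Point.some _ _ h₀) = 0 := by
        rw [succ_nsmul, hsmul, add_of_Y_eq hx hy]
      exact hntor (n + 1) (by omega) this
    set L := (curveQt A B).slope xn x₀ yn y₀ with hLdef
    have hsum : (n + 1) • (Point.some _ _ h₀) =
        Point.some _ _ ((curveQt A B).nonsingular_add hR h₀ (fun h => hxy h.1 h.2)) := by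
      rw [succ_nsmul, hsmul, add_some (fun h => hxy h.1 h.2)]
    -- produce the residue of the slope and the two key algebraic identities
    have main : ∃ lam : F, Res φ (ι π ^ a * L) lam ∧
        lam ^ 2 - c / (n : F) ^ 2 - c = c / ((n : F) + 1) ^ 2 ∧
        -(lam * (c / ((n : F) + 1) ^ 2 - c / (n : F) ^ 2) + d / (n : F) ^ 3)
          = d / ((n : F) + 1) ^ 3 := by
      have htwo : Res φ (2 : RatFunc ℚ) (2 : F) := by
        have := res_natCast (φ := φ) 2; push_cast at this; exact this
      have hthree : Res φ (3 : RatFunc ℚ) (3 : F) := by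
        have := res_natCast (φ := φ) 3; push_cast at this; exact this
      have h2F : (2 : F) ≠ 0 := by norm_num
      have h4F : (4 : F) ≠ 0 := by norm_num
      have h8F : (8 : F) ≠ 0 := by norm_num
      by_cases hn1 : n = 1
      · -- doubling case
        subst hn1
        rw [one_nsmul] at hsmul
        injection hsmul with h1 h2
        subst h1
        subst h2
        have hy0 : y₀ ≠ (curveQt A B).negY x₀ y₀ := hxy rfl
        have hy0' : y₀ ≠ 0 := by
          intro h
          exact hy0 (by rw [curve_negY, h, _root_.neg_zero])
        have hslope : L = (3 * x₀ ^ 2 + ι A) / (2 * y₀) := by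
          rw [hLdef, WeierstrassCurve.Affine.slope_of_Y_ne rfl hy0, curve_negY,
            curve_a₁, curve_a₂, curve_a₄]
          congr 1 <;> ring
        have hA : φ (π ^ (4 * a) * A) = 0 := by
          rw [map_mul, map_pow, phi_pi hker, zero_pow (by omega), zero_mul]
        have hden1 : (2 : RatFunc ℚ) * y₀ ≠ 0 := mul_ne_zero (by norm_num) hy0'
        have hden2 : (2 : RatFunc ℚ) * (ι π ^ (3 * a) * y₀) ≠ 0 :=
          mul_ne_zero (by norm_num) (mul_ne_zero (pow_ne_zero _ hπ0) hy0')
        have hLK : ι π ^ a * L =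
            (3 * (ι π ^ (2 * a) * x₀) ^ 2 + ι (π ^ (4 * a) * A)) /
              (2 * (ι π ^ (3 * a) * y₀)) := by
          rw [hslope, map_mul, map_pow, ← mul_div_assoc,
            div_eq_div_iff hden1 hden2]
          ring
        have hnum : Res φ (3 * (ι π ^ (2 * a) * x₀) ^ 2 + ι (π ^ (4 * a) * A))
            (3 * c ^ 2) := by
          have h1 := (hthree.mul (hc.mul hc)).add (res_algebraMap (φ := φ) (π ^ (4 * a) * A))
          refine (h1.congr_left (by ring)).congr ?_
          rw [hA]; ring
        have hden : Res φ (2 * (ι π ^ (3 * a) * y₀)) ((2 : F) * d) := htwo.mul hd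
        have h2d : (2 : F) * d ≠ 0 := mul_ne_zero h2F hd0
        refine ⟨3 * c ^ 2 / (2 * d), (hnum.div hden h2d).congr_left hLK.symm, ?_, ?_⟩
        · have hsq : ((2 : F) * d) ^ 2 = 4 * c ^ 3 := by
            rw [mul_pow, hcd]; norm_num
          push_cast
          rw [div_pow, hsq]
          field_simp
          ring
        · push_cast
          field_simp
          linear_combination (-18 : F) * hcd
      · -- chord case, n ≥ 2
        have hn2 : 2 ≤ n := by omega
        have hn21 : ((n : F) ^ 2 - 1) ≠ 0 := by
          have h1 : ((n ^ 2 - 1 : ℕ) : F) ≠ 0 :=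
            natF_ne hker hπ (Nat.sub_ne_zero_of_lt (by nlinarith : 1 < n ^ 2))
          intro h
          apply h1
          have h2 : ((n ^ 2 - 1 : ℕ) : F) = ((n : F) ^ 2 - 1) := by
            push_cast [Nat.cast_sub (by nlinarith : 1 ≤ n ^ 2)]
            ring
          rw [h2, h]
        have h1n2 : (1 - (n : F) ^ 2) ≠ 0 := by
          intro h; apply hn21; linear_combination -h
        have hxne : xn ≠ x₀ := by
          intro h
          have h1 : Res φ (ι π ^ (2 * a) * x₀) (c / (n : F) ^ 2) := h ▸ hcn
          have h2 : c / (n : F) ^ 2 = c := h1.unique hc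
          have h3 : c = c * (n : F) ^ 2 := (div_eq_iff (pow_ne_zero 2 hNn)).mp h2
          have h4 : c * ((n : F) ^ 2 - 1) = 0 := by linear_combination -h3
          rcases mul_eq_zero.mp h4 with h5 | h5
          · exact hc0 h5
          · exact hn21 h5
        have hsub : xn - x₀ ≠ 0 := sub_ne_zero.mpr hxne
        have hsubden : ι π ^ (2 * a) * xn - ι π ^ (2 * a) * x₀ ≠ 0 := by
          rw [show ι π ^ (2 * a) * xn - ι π ^ (2 * a) * x₀
              = ι π ^ (2 * a) * (xn - x₀) by ring]
          exact mul_ne_zero (pow_ne_zero _ hπ0) hsub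
        have hslope : L = (yn - y₀) / (xn - x₀) := by
          rw [hLdef, WeierstrassCurve.Affine.slope_of_X_ne hxne]
        have hLK : ι π ^ a * L = (ι π ^ (3 * a) * yn - ι π ^ (3 * a) * y₀) /
            (ι π ^ (2 * a) * xn - ι π ^ (2 * a) * x₀) := by
          rw [hslope, ← mul_div_assoc, div_eq_div_iff hsub hsubden]
          ring
        have hdenF : c / (n : F) ^ 2 - c ≠ 0 := by
          intro h
          have h2 : c = c * (n : F) ^ 2 :=
            (div_eq_iff (pow_ne_zero 2 hNn)).mp (sub_eq_zero.mp h)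
          have h4 : c * ((n : F) ^ 2 - 1) = 0 := by linear_combination -h2
          rcases mul_eq_zero.mp h4 with h5 | h5
          · exact hc0 h5
          · exact hn21 h5
        have hden2 : (n : F) * c * (1 - (n : F) ^ 2) ≠ 0 :=
          mul_ne_zero (mul_ne_zero hNn hc0) h1n2
        have hlam : (d / (n : F) ^ 3 - d) / (c / (n : F) ^ 2 - c)
            = (d * (1 - (n : F) ^ 3)) / ((n : F) * c * (1 - (n : F) ^ 2)) := by
          rw [div_eq_div_iff hdenF hden2]
          field_simp
        refine ⟨(d / (n : F) ^ 3 - d) / (c / (n : F) ^ 2 - c),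
          ((hdn.sub hd).div (hcn.sub hc) hdenF).congr_left hLK.symm, ?_, ?_⟩
        · rw [hlam, div_pow, mul_pow, hcd]
          field_simp [hNn, hc0, h1n2, hNn1]
          ring
        · rw [hlam]
          field_simp [hNn, hc0, h1n2, hNn1]
          ring
    obtain ⟨lam, hL, halg1, halg2⟩ := main
    have hx3 : ι π ^ (2 * a) * ((curveQt A B).addX xn x₀ L) =
        (ι π ^ a * L) ^ 2 - ι π ^ (2 * a) * xn - ι π ^ (2 * a) * x₀ := by
      rw [curve_addX]; ring
    have resX : Res φ (ι π ^ (2 * a) * ((curveQt A B).addX xn x₀ L))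
        (c / ((n : F) + 1) ^ 2) := by
      have h1 := ((hL.mul hL).sub hcn).sub hc
      refine (h1.congr_left ?_).congr ?_
      · rw [hx3]; ring
      · rw [← halg1]; ring
    have hy3 : ι π ^ (3 * a) * ((curveQt A B).addY xn x₀ yn L) =
        -((ι π ^ a * L) * (ι π ^ (2 * a) * ((curveQt A B).addX xn x₀ L)
          - ι π ^ (2 * a) * xn) + ι π ^ (3 * a) * yn) := by
      rw [curve_addY, curve_addX]; ring
    have resY : Res φ (ι π ^ (3 * a) * ((curveQt A B).addY xn x₀ yn L))
        (d / ((n : F) + 1) ^ 3) := by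
      have h1 := ((hL.mul (resX.sub hcn)).add hdn).neg
      refine (h1.congr_left hy3.symm).congr ?_
      rw [← halg2]
    refine ⟨_, _, (curveQt A B).nonsingular_add hR h₀ (fun h => hxy h.1 h.2), hsum, ?_, ?_⟩
    · refine resX.congr ?_
      push_cast; ring
    · refine resY.congr ?_
      push_cast; ring

end Key

section Count

open UniqueFactorizationMonoid

noncomputable def cnt (π x : Polynomial ℚ) : ℕ := Multiset.count π (normalizedFactors x)

variable {π : Polynomial ℚ}

lemma cnt_mul {x y : Polynomial ℚ} (hx : x ≠ 0) (hy : y ≠ 0) :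
    cnt π (x * y) = cnt π x + cnt π y := by
  unfold cnt
  rw [normalizedFactors_mul hx hy, Multiset.count_add]

lemma cnt_pow (hπ : Irreducible π) (hm : π.Monic) (m : ℕ) : cnt π (π ^ m) = m := by
  unfold cnt
  rw [hπ.normalizedFactors_pow, hm.normalize_eq_self, Multiset.count_replicate_self]

lemma cnt_sq (x : Polynomial ℚ) : cnt π (x ^ 2) = 2 * cnt π x := by
  unfold cnt
  rw [normalizedFactors_pow, Multiset.count_nsmul]

lemma cnt_eq_zero_of_not_dvd {x : Polynomial ℚ} (h : ¬ π ∣ x) : cnt π x = 0 := by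
  unfold cnt
  rw [Multiset.count_eq_zero]
  exact fun hmem => h (dvd_of_mem_normalizedFactors hmem)

lemma dvd_of_cnt_pos {x : Polynomial ℚ} (hx : cnt π x ≠ 0) : π ∣ x :=
  dvd_of_mem_normalizedFactors (Multiset.count_pos.mp (Nat.pos_of_ne_zero hx))

lemma cnt_pos_of_dvd (hπ : Irreducible π) (hmon : π.Monic) {x : Polynomial ℚ}
    (hx : x ≠ 0) (h : π ∣ x) : 1 ≤ cnt π x := by
  obtain ⟨q, hq, hassoc⟩ := exists_mem_normalizedFactors_of_dvd hx hπ h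
  have hπq : π = q := by
    rw [← hmon.normalize_eq_self, normalize_eq_normalize hassoc.dvd hassoc.symm.dvd,
      normalize_normalized_factor q hq]
  exact Multiset.one_le_count_iff_mem.mpr (hπq ▸ hq)

lemma pow_cnt_dvd {x : Polynomial ℚ} (hx : x ≠ 0) : π ^ (cnt π x) ∣ x := by
  have h1 : Multiset.replicate (cnt π x) π ≤ normalizedFactors x :=
    Multiset.le_count_iff_replicate_le.mp le_rfl
  have h2 := Multiset.prod_dvd_prod_of_le h1
  rw [Multiset.prod_replicate] at h2
  exact h2.trans (prod_normalizedFactors hx).dvd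

end Count

section PerPrime

open WeierstrassCurve.Affine WeierstrassCurve.Affine.Point UniqueFactorizationMonoid
open Classical

lemma per_prime (A B : Polynomial ℚ) {x₀ y₀ : RatFunc ℚ}
    (h₀ : (curveQt A B).Nonsingular x₀ y₀)
    (hntor : ∀ n : ℕ, 1 ≤ n → n • (Point.some _ _ h₀) ≠ 0)
    {k : ℕ} (hk : 2 ≤ k)
    {xk yk : RatFunc ℚ} {hkns : (curveQt A B).Nonsingular xk yk}
    (hksmul : k • (Point.some _ _ h₀) = Point.some _ _ hkns)
    {BP' : Polynomial ℚ} (hden : x₀.denom = BP' ^ 2)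
    {π : Polynomial ℚ} (hπm : π.Monic) (hπ : Irreducible π) (hdvd : π ∣ BP') :
    cnt π xk.denom = 2 * cnt π BP' := by
  have hBP'0 : BP' ≠ 0 := by
    intro h
    exact RatFunc.denom_ne_zero x₀ (by rw [hden, h, zero_pow two_ne_zero])
  set a := cnt π BP' with ha_def
  have ha : 1 ≤ a := cnt_pos_of_dvd hπ hπm hBP'0 hdvd
  have hπ0 : π ≠ 0 := hπ.ne_zero
  -- decompose the denominator
  have hpowdvd : π ^ (2 * a) ∣ x₀.denom := by
    rw [hden, show 2 * a = a * 2 by ring, pow_mul]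
    exact pow_dvd_pow_of_dvd (pow_cnt_dvd hBP'0) 2
  obtain ⟨s, hs⟩ := hpowdvd
  have hdenom0 : x₀.denom ≠ 0 := RatFunc.denom_ne_zero x₀
  have hs0 : s ≠ 0 := by
    intro h; rw [h, mul_zero] at hs; exact hdenom0 hs
  have hcnt_denom : cnt π x₀.denom = 2 * a := by rw [hden, cnt_sq]
  have hπs : ¬ π ∣ s := by
    intro h
    have h1 : cnt π x₀.denom = 2 * a + cnt π s := by
      rw [hs, cnt_mul (pow_ne_zero _ hπ0) hs0, cnt_pow hπ hπm]
    have h2 := cnt_pos_of_dvd hπ hπm hs0 h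
    omega
  -- the residue field
  set I := Ideal.span {π} with hI_def
  haveI hImax : I.IsMaximal := PrincipalIdealRing.isMaximal_of_irreducible hπ
  letI : Field (Polynomial ℚ ⧸ I) := Ideal.Quotient.field I
  haveI : CharZero (Polynomial ℚ ⧸ I) :=
    charZero_of_injective_algebraMap ((algebraMap ℚ (Polynomial ℚ ⧸ I)).injective)
  set φ := Ideal.Quotient.mk I with hφ_def
  have hker : ∀ q : Polynomial ℚ, φ q = 0 ↔ π ∣ q := fun q => by
    rw [hφ_def, Ideal.Quotient.eq_zero_iff_mem, hI_def, Ideal.mem_span_singleton]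
  -- the residue of π^{2a} x₀
  have hqs : φ s ≠ 0 := fun h => hπs ((hker s).mp h)
  have hπdenom : π ∣ x₀.denom := by
    rw [hs]; exact Dvd.dvd.mul_right (dvd_pow_self π (by omega)) s
  have hnum0 : ¬ π ∣ x₀.num :=
    fun h => hπ.not_isUnit ((RatFunc.isCoprime_num_denom x₀).isUnit_of_dvd' h hπdenom)
  have hc : Res φ (ι π ^ (2 * a) * x₀) (φ x₀.num / φ s) := by
    refine ⟨x₀.num, s, hqs, ?_, div_mul_cancel₀ _ hqs⟩
    calc (ι π ^ (2 * a) * x₀) * ι s = x₀ * ι (π ^ (2 * a) * s) := by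
          rw [map_mul, map_pow]; ring
    _ = x₀ * ι x₀.denom := by rw [← hs]
    _ = ι x₀.num := xi_mul_denom x₀
  have hc0 : φ x₀.num / φ s ≠ 0 :=
    div_ne_zero (fun h => hnum0 ((hker _).mp h)) hqs
  set c := φ x₀.num / φ s with hc_def
  -- the residue of π^{3a} y₀
  set η := ι π ^ (3 * a) * y₀ with hη_def
  have hy2 : y₀ ^ 2 = x₀ ^ 3 + ι A * x₀ + ι B := curve_equation A B h₀.1
  have hη2 : η * η = (ι π ^ (2 * a) * x₀) ^ 3 + ι (π ^ (4 * a) * A) * (ι π ^ (2 * a) * x₀)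
      + ι (π ^ (6 * a) * B) := by
    rw [hη_def, map_mul, map_mul, map_pow, map_pow]
    linear_combination (ι π ^ (6 * a)) * hy2
  have hA0 : φ (π ^ (4 * a) * A) = 0 := by
    rw [map_mul, map_pow, phi_pi hker, zero_pow (by omega), zero_mul]
  have hB0 : φ (π ^ (6 * a) * B) = 0 := by
    rw [map_mul, map_pow, phi_pi hker, zero_pow (by omega), zero_mul]
  have hresη2 : Res φ (η * η) (c * c * c) := by
    have h1 := ((hc.mul hc).mul hc).add ((res_algebraMap (φ := φ) (π ^ (4 * a) * A)).mul hc)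
    have h2 := h1.add (res_algebraMap (φ := φ) (π ^ (6 * a) * B))
    refine (h2.congr_left ?_).congr ?_
    · rw [hη2]; ring
    · rw [hA0, hB0]; ring
  have hφdη : φ η.denom ≠ 0 := denom_phi_ne_of_sq hker hπ hresη2
  have hd := res_total hker hφdη
  set d := φ η.num / φ η.denom with hd_def
  have hd2 : d ^ 2 = c ^ 3 := by
    have h5 : d * d = c * c * c := (hd.mul hd).unique hresη2
    rw [pow_two, h5]; ring
  have hd0 : d ≠ 0 := by
    intro h
    apply hc0
    have : c ^ 3 = 0 := by rw [← hd2, h, zero_pow two_ne_zero]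
    exact pow_eq_zero_iff three_ne_zero |>.mp this
  -- apply the key induction
  obtain ⟨x', y', h', hsm', hcx', -⟩ :=
    key hker hπ A B h₀ hntor a ha c d hc0 hd0 hd2 hc hd k (by omega)
  have hinj := hksmul.symm.trans hsm'
  injection hinj with h1 h2
  rw [← h1] at hcx'
  -- extract the multiplicity of π in the denominator of xk
  obtain ⟨p, q, hq, heq, hr⟩ := hcx'
  have hkF : ((k : ℕ) : Polynomial ℚ ⧸ I) ≠ 0 := Nat.cast_ne_zero.mpr (by omega)
  have hrne : c / ((k : ℕ) : Polynomial ℚ ⧸ I) ^ 2 ≠ 0 := div_ne_zero hc0 (pow_ne_zero _ hkF)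
  have hφp : φ p ≠ 0 := by
    intro h
    rw [h] at hr
    rcases mul_eq_zero.mp hr with h' | h'
    · exact hrne h'
    · exact hq h'
  have hπp : ¬ π ∣ p := fun h => hφp ((hker p).mpr h)
  have hπq : ¬ π ∣ q := fun h => hq ((hker q).mpr h)
  have hp0 : p ≠ 0 := fun h => hφp (by rw [h, _root_.map_zero])
  have hq0 : q ≠ 0 := fun h => hq (by rw [h, _root_.map_zero])
  have hxk0 : xk ≠ 0 := by
    intro h
    apply hφp
    have h1 : ι p = 0 := by rw [← heq, h]; ring
    rw [show p = 0 from ι_inj (by simpa using h1), _root_.map_zero]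
  have hnumk : xk.num ≠ 0 :=
    fun h => hxk0 (by rw [← xk.num_div_denom, h, _root_.map_zero, zero_div])
  have hdenomk0 : xk.denom ≠ 0 := RatFunc.denom_ne_zero xk
  have hpoly : π ^ (2 * a) * xk.num * q = p * xk.denom := by
    apply ι_inj
    simp only [map_mul, map_pow]
    calc ι π ^ (2 * a) * ι xk.num * ι q
        = ι π ^ (2 * a) * (xk * ι xk.denom) * ι q := by rw [xi_mul_denom]
    _ = ((ι π ^ (2 * a) * xk) * ι q) * ι xk.denom := by ring
    _ = ι p * ι xk.denom := by rw [heq]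
  have hc1 : cnt π (π ^ (2 * a) * xk.num * q) = 2 * a + cnt π xk.num := by
    rw [cnt_mul (mul_ne_zero (pow_ne_zero _ hπ0) hnumk) hq0,
      cnt_mul (pow_ne_zero _ hπ0) hnumk, cnt_pow hπ hπm, cnt_eq_zero_of_not_dvd hπq]
    omega
  have hc2 : cnt π (p * xk.denom) = cnt π xk.denom := by
    rw [cnt_mul hp0 hdenomk0, cnt_eq_zero_of_not_dvd hπp, zero_add]
  rw [hpoly, hc2] at hc1
  have hnumcnt : cnt π xk.num = 0 := by
    by_contra h
    have hd1 : π ∣ xk.num := dvd_of_cnt_pos h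
    have hd2' : π ∣ xk.denom := dvd_of_cnt_pos (by omega)
    exact hπ.not_isUnit ((RatFunc.isCoprime_num_denom xk).isUnit_of_dvd' hd1 hd2')
  omega

end PerPrime

end CanonAux

/-- A short Weierstrass curve `y² = x³ + A·x + B` over `ℚ(t)` is minimal if there is
no irreducible `π ∈ ℚ[t]` with `π⁴ ∣ A` and `π⁶ ∣ B`. -/
def MinimalQt (A B : Polynomial ℚ) : Prop :=
  ¬ ∃ π : Polynomial ℚ, Irreducible π ∧ π ^ 4 ∣ A ∧ π ^ 6 ∣ B

/-- The term `Bseq n` of a sequence of polynomials has a primitive divisor if some monic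
irreducible `d ∈ ℚ[t]` divides `Bseq n` but divides no `Bseq m` with `1 ≤ m < n`. -/
def HasPrimitiveDivisor (Bseq : ℕ → Polynomial ℚ) (n : ℕ) : Prop :=
  ∃ d : Polynomial ℚ, d.Monic ∧ Irreducible d ∧ d ∣ Bseq n ∧
    ∀ m : ℕ, 1 ≤ m → m < n → ¬ d ∣ Bseq m

open Classical in
open CanonAux UniqueFactorizationMonoid WeierstrassCurve.Affine WeierstrassCurve.Affine.Point in
/-- Canonical factorization for a multiplication map: if `P′` is a non-torsion point on a
minimal short Weierstrass curve over `ℚ(t)`, `k ≥ 2` and `P = k•P′`, then `B_{P′}`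
divides `B_P` and the quotient `B_P / B_{P′}` is coprime to `B_{P′}` in `ℚ[t]`. -/
theorem canonical_factorization (A B : Polynomial ℚ)
    (hΔ : (-16 * (4 * A ^ 3 + 27 * B ^ 2) : Polynomial ℚ) ≠ 0)
    (hmin : MinimalQt A B)
    (P' : (curveQt A B).Point)
    (hP' : ∀ n : ℕ, 1 ≤ n → n • P' ≠ 0)
    (k : ℕ) (hk : 2 ≤ k)
    (BP' BP : Polynomial ℚ)
    (hBP' : BP'.Monic ∧ (xCoord P').denom = BP' ^ 2)
    (hBP : BP.Monic ∧ (xCoord (k • P')).denom = BP ^ 2) :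
    BP' ∣ BP ∧ IsCoprime (BP / BP') BP' := by
  classical
  obtain ⟨hBP'm, hden'⟩ := hBP'
  obtain ⟨hBPm, hden⟩ := hBP
  have hBP'0 : BP' ≠ 0 := hBP'm.ne_zero
  have hBP0 : BP ≠ 0 := hBPm.ne_zero
  rcases P' with _ | @⟨x₀, y₀, h₀⟩
  · exact absurd (by rw [one_nsmul]; rfl) (hP' 1 le_rfl)
  have hkne : k • (Point.some _ _ h₀) ≠ 0 := hP' k (by omega)
  rcases hkk : k • (Point.some _ _ h₀) with _ | @⟨xk, yk, hkns⟩
  · exact absurd (by rw [hkk]; rfl) hkne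
  have hden₀ : x₀.denom = BP' ^ 2 := hden'
  have hdenk : xk.denom = BP ^ 2 := by rw [hkk] at hden; exact hden
  have claim : ∀ π : Polynomial ℚ, π.Monic → Irreducible π → π ∣ BP' →
      cnt π BP = cnt π BP' := by
    intro π hm hirr hdvd
    have h1 : cnt π xk.denom = 2 * cnt π BP' :=
      per_prime A B h₀ hP' hk hkk hden₀ hm hirr hdvd
    rw [hdenk, cnt_sq] at h1
    omega
  have hdvd : BP' ∣ BP := by
    rw [dvd_iff_normalizedFactors_le_normalizedFactors hBP'0 hBP0]
    apply Multiset.le_iff_count.mpr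
    intro π'
    by_cases hmem : π' ∈ normalizedFactors BP'
    · have hirr := irreducible_of_normalized_factor π' hmem
      have hnorm : π'.Monic := by
        rw [← normalize_normalized_factor π' hmem]
        exact Polynomial.monic_normalize hirr.ne_zero
      have h1 := claim π' hnorm hirr (dvd_of_mem_normalizedFactors hmem)
      unfold cnt at h1
      omega
    · rw [Multiset.count_eq_zero_of_notMem hmem]
      exact Nat.zero_le _
  refine ⟨hdvd, ?_⟩
  obtain ⟨m, hm⟩ := hdvd
  have hm0 : m ≠ 0 := by rintro rfl; rw [mul_zero] at hm; exact hBP0 hm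
  have hquot : BP / BP' = m :=
    mul_left_cancel₀ hBP'0
      (by rw [EuclideanDomain.mul_div_cancel' hBP'0 ⟨m, hm⟩]; exact hm)
  rw [hquot]
  rw [← EuclideanDomain.gcd_isUnit_iff]
  by_contra hng
  have hg0 : EuclideanDomain.gcd m BP' ≠ 0 :=
    fun h => hBP'0 (EuclideanDomain.gcd_eq_zero_iff.mp h).2
  obtain ⟨r, hr_irr, hr_dvd⟩ := WfDvdMonoid.exists_irreducible_factor hng hg0
  have hrm : r ∣ m := hr_dvd.trans (EuclideanDomain.gcd_dvd_left _ _)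
  have hrB : r ∣ BP' := hr_dvd.trans (EuclideanDomain.gcd_dvd_right _ _)
  have hassoc : Associated r (normalize r) := associated_normalize r
  have hπirr : Irreducible (normalize r) := hassoc.irreducible hr_irr
  have hπm : (normalize r).Monic := Polynomial.monic_normalize hr_irr.ne_zero
  have hπdm : normalize r ∣ m := hassoc.symm.dvd.trans hrm
  have hπdB : normalize r ∣ BP' := hassoc.symm.dvd.trans hrB
  have h1 := claim (normalize r) hπm hπirr hπdB
  rw [hm, cnt_mul hBP'0 hm0] at h1
  have h3 := cnt_pos_of_dvd hπirr hπm hm0 hπdm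
  omega
end
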